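/- arXiv:1404.5485 — 5 statements merged into one kernel-verified Lean document; each statement's English description precedes it below -/
import Mathlib

section
/- Let Θ and X be compact metric spaces. For each N, let θ_1,…,θ_N ∈ Θ and let F^N : Θ × X × P(X) → ℝ be a sequence of functions, uniformly equi-continuous on Θ × X × P(X) (P(X) endowed with the 1-Wasserstein metric), with a common modulus of continuity ω in the measure variable. Let x̄^N = (x_1^N,…,x_N^N) ∈ X^N be a Nash equilibrium of the N-player game with costs J_i^N(x_i, x_{-i}) = F^N(θ_i, x_i, (1/(N−1)) Σ_{j≠i} δ_{x_j}). Define μ^N := (1/N) Σ_{i=1}^N δ_{θ_i}, ν^N := (1/N) Σ_{i=1}^N δ_{x_i^N} and γ^N := (1/N) Σ_{i=1}^N δ_{(θ_i, x_i^N)}. Assume that (up to subsequences) μ^N ⇀ μ, ν^N ⇀ ν, γ^N ⇀ γ weakly-* and F^N → F uniformly on Θ × X × P(X). Then γ is a Cournot-Nash equilibrium for F and μ. -/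
open MeasureTheory Filter Topology Set
open scoped ENNReal NNReal
set_option linter.unusedSectionVars false

def Couplings {Θ X : Type*} [MeasurableSpace Θ] [MeasurableSpace X]
    (μ : Measure Θ) (ν : Measure X) : Set (Measure (Θ × X)) :=
  {γ | IsProbabilityMeasure γ ∧ γ.map Prod.fst = μ ∧ γ.map Prod.snd = ν}

noncomputable def transportCost {Θ X : Type*} [MeasurableSpace Θ] [MeasurableSpace X]
    (c : Θ → X → ℝ) (μ : Measure Θ) (ν : Measure X) : ℝ :=
  sInf ((fun γ => ∫ p, c p.1 p.2 ∂γ) '' Couplings μ ν)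

noncomputable def W1 {X : Type*} [MeasurableSpace X] [PseudoMetricSpace X]
    (μ ν : Measure X) : ℝ :=
  transportCost (fun x y => dist x y) μ ν

section W1lemmas
variable {X : Type*} [MetricSpace X] [CompactSpace X] [MeasurableSpace X] [BorelSpace X]

lemma dist_le_diamX (x y : X) : dist x y ≤ Metric.diam (univ : Set X) :=
  Metric.dist_le_diam_of_mem isCompact_univ.isBounded (mem_univ x) (mem_univ y)

lemma integrable_dist_coupling (π : Measure (X × X)) [IsFiniteMeasure π] :
    Integrable (fun p : X × X => dist p.1 p.2) π :=
  continuous_dist.integrable_of_hasCompactSupport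
    (HasCompactSupport.of_compactSpace _)

lemma W1_nonneg (α β : Measure X) : 0 ≤ W1 α β := by
  apply Real.sInf_nonneg
  rintro x ⟨π, ⟨hπ, -, -⟩, rfl⟩
  exact integral_nonneg fun p => dist_nonneg

lemma W1_le_coupling {α : Measure X} {β : Measure X} {π : Measure (X × X)}
    (hπ : π ∈ Couplings α β) : W1 α β ≤ ∫ p, dist p.1 p.2 ∂π := by
  apply csInf_le
  · exact ⟨0, by rintro x ⟨π', ⟨h1, -, -⟩, rfl⟩; exact integral_nonneg fun p => dist_nonneg⟩
  · exact ⟨π, hπ, rfl⟩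

lemma W1_self (α : Measure X) [IsProbabilityMeasure α] : W1 α α = 0 := by
  have hd : Measurable fun x : X => (x, x) := measurable_id.prodMk measurable_id
  have hmem : (α.map fun x => (x, x)) ∈ Couplings α α := by
    refine ⟨Measure.isProbabilityMeasure_map hd.aemeasurable, ?_, ?_⟩
    · rw [Measure.map_map measurable_fst hd]; simp [Function.comp_def]
    · rw [Measure.map_map measurable_snd hd]; simp [Function.comp_def]
  have h := W1_le_coupling hmem
  rw [integral_map hd.aemeasurable continuous_dist.aestronglyMeasurable] at h
  simp only [dist_self] at h
  rw [integral_zero] at h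
  exact le_antisymm h (W1_nonneg _ _)

end W1lemmas

section Helpers
variable {X : Type*} [MeasurableSpace X]

lemma measure_map_finset_sum_aux {Y : Type*} [MeasurableSpace Y] {ι : Type*} (s : Finset ι)
    (μ : ι → Measure X) {f : X → Y} (hf : Measurable f) :
    (∑ i ∈ s, μ i).map f = ∑ i ∈ s, (μ i).map f := by
  ext t ht
  rw [Measure.map_apply hf ht, Measure.finset_sum_apply, Measure.finset_sum_apply]
  simp_rw [Measure.map_apply hf ht]

lemma sum_restrict_eq (μ : Measure X) {m : ℕ} (A : Fin m → Set X)
    (hmeas : ∀ k, MeasurableSet (A k)) (hdisj : Pairwise (Function.onFun Disjoint A))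
    (hcover : (⋃ k, A k) = univ) : ∑ k, μ.restrict (A k) = μ := by
  ext t ht
  rw [Measure.finset_sum_apply]
  simp_rw [Measure.restrict_apply ht]
  rw [← tsum_fintype (L := SummationFilter.unconditional _), ← measure_iUnion
      (fun i j hij => (hdisj hij).mono inter_subset_right inter_subset_right)
      (fun k => ht.inter (hmeas k)), ← inter_iUnion, hcover, inter_univ]

lemma sum_meas_eq_one (μ : Measure X) [IsProbabilityMeasure μ] {m : ℕ} (A : Fin m → Set X)
    (hmeas : ∀ k, MeasurableSet (A k)) (hdisj : Pairwise (Function.onFun Disjoint A))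
    (hcover : (⋃ k, A k) = univ) : ∑ k, μ (A k) = 1 := by
  have h := congrArg (fun ρ : Measure X => ρ univ) (sum_restrict_eq μ A hmeas hdisj hcover)
  simpa [Measure.finset_sum_apply] using h

lemma smul_restrict_add (μ : Measure X) (t : Set X) (a : ℝ≥0∞) (hle : a ≤ μ t) (hfin : μ t ≠ ∞) :
    (a / μ t) • μ.restrict t + ((μ t - a) / μ t) • μ.restrict t = μ.restrict t := by
  rcases eq_or_ne (μ t) 0 with h0 | h0
  · have : μ.restrict t = 0 := Measure.restrict_eq_zero.mpr h0
    simp [this]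
  · rw [← add_smul, ENNReal.div_add_div_same, add_tsub_cancel_of_le hle,
      ENNReal.div_self h0 hfin, one_smul]

lemma coeff_mul (a b c : ℝ≥0∞) (hb : b ≠ ∞) (hc : c ≠ ∞) (h0 : c = 0 → a = 0) :
    a / (b * c) * c = a / b := by
  rcases eq_or_ne c 0 with hc0 | hc0
  · simp [hc0, h0 hc0]
  · rw [div_eq_mul_inv, div_eq_mul_inv, ENNReal.mul_inv (Or.inr hc) (Or.inl hb),
      mul_assoc, mul_assoc, ENNReal.inv_mul_cancel hc0 hc, mul_one]

lemma ediv_mul_cancel (a b : ℝ≥0∞) (hb : b ≠ ∞) (h0 : b = 0 → a = 0) : a / b * b = a := by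
  rcases eq_or_ne b 0 with hb0 | hb0
  · simp [hb0, h0 hb0]
  · exact ENNReal.div_mul_cancel hb0 hb

end Helpers

lemma ennreal_sum_sub {ι : Type*} (s : Finset ι) (f g : ι → ℝ≥0∞) (hle : ∀ k ∈ s, g k ≤ f k)
    (hfin : ∀ k ∈ s, f k ≠ ∞) :
    ∑ k ∈ s, (f k - g k) = ∑ k ∈ s, f k - ∑ k ∈ s, g k := by
  have hgfin : ∑ k ∈ s, g k ≠ ∞ := by
    rw [← lt_top_iff_ne_top, ENNReal.sum_lt_top]
    exact fun k hk => lt_of_le_of_lt (hle k hk) (lt_top_iff_ne_top.mpr (hfin k hk))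
  refine ENNReal.eq_sub_of_add_eq hgfin ?_
  rw [← Finset.sum_add_distrib]
  exact Finset.sum_congr rfl fun k hk => tsub_add_cancel_of_le (hle k hk)

section Partition
variable {X : Type*} [MetricSpace X] [CompactSpace X] [MeasurableSpace X] [BorelSpace X]

lemma W1_le_of_partition (α β : Measure X) [IsProbabilityMeasure α] [IsProbabilityMeasure β]
    {m : ℕ} (A : Fin m → Set X) (hmeas : ∀ k, MeasurableSet (A k))
    (hdisj : Pairwise (Function.onFun Disjoint A)) (hcover : (⋃ k, A k) = univ)
    {ε : ℝ} (hε : 0 ≤ ε) (hdiam : ∀ k, ∀ x ∈ A k, ∀ y ∈ A k, dist x y ≤ ε)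
    {η : ℝ≥0∞} (hηtop : η ≠ ∞)
    (hη : ∀ k, α (A k) ≤ β (A k) + η ∧ β (A k) ≤ α (A k) + η) :
    W1 α β ≤ ε + Metric.diam (univ : Set X) * ((m : ℝ) * η.toReal) := by
  classical
  set D := Metric.diam (univ : Set X) with hD
  have hDnn : 0 ≤ D := Metric.diam_nonneg
  have hαfin : ∀ k, α (A k) ≠ ∞ := fun k => measure_ne_top α _
  have hβfin : ∀ k, β (A k) ≠ ∞ := fun k => measure_ne_top β _
  set a : Fin m → ℝ≥0∞ := fun k => min (α (A k)) (β (A k)) with ha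
  have hak_le_α : ∀ k, a k ≤ α (A k) := fun k => min_le_left _ _
  have hak_le_β : ∀ k, a k ≤ β (A k) := fun k => min_le_right _ _
  set s : ℝ≥0∞ := ∑ k, a k with hs
  have hsumα : ∑ k, α (A k) = 1 := sum_meas_eq_one α A hmeas hdisj hcover
  have hsumβ : ∑ k, β (A k) = 1 := sum_meas_eq_one β A hmeas hdisj hcover
  have hsle : s ≤ 1 := by
    rw [hs, ← hsumα]; exact Finset.sum_le_sum fun k _ => hak_le_α k
  have h1sfin : (1 : ℝ≥0∞) - s ≠ ∞ := (lt_of_le_of_lt tsub_le_self ENNReal.one_lt_top).ne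
  set ρ : Fin m → Measure (X × X) := fun k =>
    (a k / (α (A k) * β (A k))) • ((α.restrict (A k)).prod (β.restrict (A k))) with hρ
  set α' : Measure X := ∑ k, ((α (A k) - a k) / α (A k)) • α.restrict (A k) with hα'
  set β' : Measure X := ∑ k, ((β (A k) - a k) / β (A k)) • β.restrict (A k) with hβ'
  have hα'univ : α' univ = 1 - s := by
    rw [hα', Measure.finset_sum_apply]
    have : ∀ k, (((α (A k) - a k) / α (A k)) • α.restrict (A k)) univ = α (A k) - a k := by
      intro k
      rw [Measure.smul_apply, Measure.restrict_apply_univ, smul_eq_mul]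
      exact ediv_mul_cancel _ _ (hαfin k) fun h => by
        simp [ha, h, le_antisymm ((hak_le_α k).trans h.le) zero_le]
    simp_rw [this]
    rw [ennreal_sum_sub _ _ _ (fun k _ => hak_le_α k) (fun k _ => hαfin k), hsumα, hs]
  have hβ'univ : β' univ = 1 - s := by
    rw [hβ', Measure.finset_sum_apply]
    have : ∀ k, (((β (A k) - a k) / β (A k)) • β.restrict (A k)) univ = β (A k) - a k := by
      intro k
      rw [Measure.smul_apply, Measure.restrict_apply_univ, smul_eq_mul]
      exact ediv_mul_cancel _ _ (hβfin k) fun h => by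
        simp [ha, h, le_antisymm ((hak_le_β k).trans h.le) zero_le]
    simp_rw [this]
    rw [ennreal_sum_sub _ _ _ (fun k _ => hak_le_β k) (fun k _ => hβfin k), hsumβ, hs]
  haveI hα'fin : IsFiniteMeasure α' :=
    ⟨by rw [hα'univ]; exact lt_of_le_of_lt tsub_le_self ENNReal.one_lt_top⟩
  haveI hβ'fin : IsFiniteMeasure β' :=
    ⟨by rw [hβ'univ]; exact lt_of_le_of_lt tsub_le_self ENNReal.one_lt_top⟩
  set πr : Measure (X × X) := (1 - s)⁻¹ • (α'.prod β') with hπr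
  set π : Measure (X × X) := (∑ k, ρ k) + πr with hπdef
  -- first marginal
  have hmapρ : ∀ k, (ρ k).map Prod.fst = (a k / α (A k)) • α.restrict (A k) := by
    intro k
    rw [hρ, Measure.map_smul, Measure.map_fst_prod, Measure.restrict_apply_univ, smul_smul]
    congr 1
    exact coeff_mul _ _ _ (hαfin k) (hβfin k) fun h => by
      simp [ha, h, le_antisymm ((hak_le_β k).trans h.le) zero_le]
  have hmapρ' : ∀ k, (ρ k).map Prod.snd = (a k / β (A k)) • β.restrict (A k) := by
    intro k
    rw [hρ, Measure.map_smul, Measure.map_snd_prod, Measure.restrict_apply_univ, smul_smul]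
    congr 1
    rw [mul_comm (α (A k))]
    exact coeff_mul _ _ _ (hβfin k) (hαfin k) fun h => by
      simp [ha, h, le_antisymm ((hak_le_α k).trans h.le) zero_le]
  have hπrfst : πr.map Prod.fst = α' := by
    rw [hπr, Measure.map_smul, Measure.map_fst_prod, hβ'univ, smul_smul]
    rcases eq_or_ne ((1 : ℝ≥0∞) - s) 0 with h0 | h0
    · have : α' = 0 := Measure.measure_univ_eq_zero.mp (by rw [hα'univ, h0])
      simp [this]
    · rw [ENNReal.inv_mul_cancel h0 h1sfin, one_smul]
  have hπrsnd : πr.map Prod.snd = β' := by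
    rw [hπr, Measure.map_smul, Measure.map_snd_prod, hα'univ, smul_smul]
    rcases eq_or_ne ((1 : ℝ≥0∞) - s) 0 with h0 | h0
    · have : β' = 0 := Measure.measure_univ_eq_zero.mp (by rw [hβ'univ, h0])
      simp [this]
    · rw [ENNReal.inv_mul_cancel h0 h1sfin, one_smul]
  have hmapfst : π.map Prod.fst = α := by
    rw [hπdef, Measure.map_add _ _ measurable_fst, measure_map_finset_sum_aux _ _ measurable_fst, hπrfst]
    simp_rw [hmapρ]
    rw [hα', ← Finset.sum_add_distrib]
    have : ∀ k ∈ Finset.univ, (a k / α (A k)) • α.restrict (A k) +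
        ((α (A k) - a k) / α (A k)) • α.restrict (A k) = α.restrict (A k) :=
      fun k _ => smul_restrict_add α (A k) (a k) (hak_le_α k) (hαfin k)
    rw [Finset.sum_congr rfl this, sum_restrict_eq α A hmeas hdisj hcover]
  have hmapsnd : π.map Prod.snd = β := by
    rw [hπdef, Measure.map_add _ _ measurable_snd, measure_map_finset_sum_aux _ _ measurable_snd, hπrsnd]
    simp_rw [hmapρ']
    rw [hβ', ← Finset.sum_add_distrib]
    have : ∀ k ∈ Finset.univ, (a k / β (A k)) • β.restrict (A k) +
        ((β (A k) - a k) / β (A k)) • β.restrict (A k) = β.restrict (A k) :=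
      fun k _ => smul_restrict_add β (A k) (a k) (hak_le_β k) (hβfin k)
    rw [Finset.sum_congr rfl this, sum_restrict_eq β A hmeas hdisj hcover]
  haveI hπprob : IsProbabilityMeasure π := by
    constructor
    have h := congrArg (fun ρ : Measure X => ρ univ) hmapfst
    simpa [Measure.map_apply measurable_fst MeasurableSet.univ] using h
  have hmem : π ∈ Couplings α β := ⟨hπprob, hmapfst, hmapsnd⟩
  refine (W1_le_coupling hmem).trans ?_
  -- integrability
  have hint : Integrable (fun p : X × X => dist p.1 p.2) π := integrable_dist_coupling π
  have hleπ1 : (∑ k, ρ k) ≤ π := by rw [hπdef]; exact Measure.le_add_right le_rfl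
  have hsingle : ∀ k, ρ k ≤ ∑ j, ρ j := fun k => Measure.le_iff'.mpr fun t => by
    rw [Measure.finset_sum_apply]
    exact Finset.single_le_sum (f := fun j => ρ j t) (fun i _ => zero_le) (Finset.mem_univ k)
  have hintk : ∀ k ∈ Finset.univ, Integrable (fun p : X × X => dist p.1 p.2) (ρ k) := fun k _ =>
    hint.mono_measure ((hsingle k).trans hleπ1)
  have hintr : Integrable (fun p : X × X => dist p.1 p.2) πr := by
    refine hint.mono_measure ?_
    rw [hπdef]; exact Measure.le_add_left le_rfl
  have hintsum : Integrable (fun p : X × X => dist p.1 p.2) (∑ k, ρ k) :=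
    hint.mono_measure hleπ1
  rw [hπdef, integral_add_measure hintsum hintr, integral_finset_sum_measure hintk]
  -- cost of matched pieces
  have hcostk : ∀ k, ∫ p, dist p.1 p.2 ∂(ρ k) ≤ ε * (a k).toReal := by
    intro k
    rw [hρ, integral_smul_measure, smul_eq_mul]
    have hb : ∫ p, dist p.1 p.2 ∂((α.restrict (A k)).prod (β.restrict (A k))) ≤
        ε * ((α (A k)) * β (A k)).toReal := by
      rw [Measure.prod_restrict]
      have hfinprod : (α.prod β) ((A k) ×ˢ (A k)) < ∞ := measure_lt_top _ _
      have hbound := norm_setIntegral_le_of_norm_le_const (μ := α.prod β)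
        (s := (A k) ×ˢ (A k)) (f := fun p : X × X => dist p.1 p.2) hfinprod
        (fun p hp => by
          rw [Real.norm_eq_abs, abs_of_nonneg dist_nonneg]
          exact hdiam k p.1 hp.1 p.2 hp.2)
      rw [Measure.real, Measure.prod_prod] at hbound
      exact (le_abs_self _).trans hbound
    calc (a k / (α (A k) * β (A k))).toReal *
          ∫ p, dist p.1 p.2 ∂((α.restrict (A k)).prod (β.restrict (A k)))
        ≤ (a k / (α (A k) * β (A k))).toReal * (ε * ((α (A k)) * β (A k)).toReal) := by
          exact mul_le_mul_of_nonneg_left hb ENNReal.toReal_nonneg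
      _ = ε * ((a k / (α (A k) * β (A k))) * ((α (A k)) * β (A k))).toReal := by
          simp only [ENNReal.toReal_mul]; ring
      _ = ε * (a k).toReal := by
          congr 2
          exact ediv_mul_cancel _ _ (ENNReal.mul_ne_top (hαfin k) (hβfin k)) fun h => by
            rcases mul_eq_zero.mp h with h' | h'
            · simp [ha, h', le_antisymm ((hak_le_α k).trans h'.le) zero_le]
            · simp [ha, h', le_antisymm ((hak_le_β k).trans h'.le) zero_le]
  -- cost of remainder
  have hcostr : ∫ p, dist p.1 p.2 ∂πr ≤ D * ((1 : ℝ≥0∞) - s).toReal := by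
    rw [hπr, integral_smul_measure, smul_eq_mul]
    have hbound := norm_integral_le_of_norm_le_const (μ := α'.prod β')
      (f := fun p : X × X => dist p.1 p.2) (C := D)
      (Eventually.of_forall fun p => by
        rw [Real.norm_eq_abs, abs_of_nonneg dist_nonneg]; exact dist_le_diamX p.1 p.2)
    have hb2 : ∫ p, dist p.1 p.2 ∂(α'.prod β') ≤ D * ((α'.prod β') univ).toReal :=
      (le_abs_self _).trans hbound
    have huniv : (α'.prod β') univ = ((1 : ℝ≥0∞) - s) * ((1 : ℝ≥0∞) - s) := by
      rw [← univ_prod_univ, Measure.prod_prod, hα'univ, hβ'univ]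
    calc ((1 : ℝ≥0∞) - s)⁻¹.toReal * ∫ p, dist p.1 p.2 ∂(α'.prod β')
        ≤ ((1 : ℝ≥0∞) - s)⁻¹.toReal * (D * ((α'.prod β') univ).toReal) :=
          mul_le_mul_of_nonneg_left hb2 ENNReal.toReal_nonneg
      _ = D * ((1 : ℝ≥0∞) - s).toReal := by
          rw [huniv]
          rcases eq_or_ne ((1 : ℝ≥0∞) - s) 0 with h0 | h0
          · simp [h0]
          · rw [ENNReal.toReal_mul, ENNReal.toReal_inv]
            have ht : ((1 : ℝ≥0∞) - s).toReal ≠ 0 := by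
              simp [ENNReal.toReal_eq_zero_iff, h0, h1sfin]
            field_simp
  -- combine
  have hsum_a : ∑ k, (a k).toReal ≤ 1 := by
    rw [← ENNReal.toReal_sum (fun k _ => (lt_of_le_of_lt (hak_le_α k)
      (measure_lt_top α _)).ne)]
    exact ENNReal.toReal_le_of_le_ofReal zero_le_one (by simpa using hsle)
  have h1s_le : ((1 : ℝ≥0∞) - s).toReal ≤ (m : ℝ) * η.toReal := by
    have h1 : (1 : ℝ≥0∞) - s ≤ (m : ℕ) • η := by
      rw [← hsumα, hs, ← ennreal_sum_sub _ _ _ (fun k _ => hak_le_α k) (fun k _ => hαfin k)]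
      calc ∑ k, (α (A k) - a k) ≤ ∑ _k : Fin m, η := by
            refine Finset.sum_le_sum fun k _ => ?_
            rcases min_cases (α (A k)) (β (A k)) with ⟨h, _⟩ | ⟨h, _⟩
            · rw [ha]; simp [h]
            · rw [ha]; simp only [h]
              exact tsub_le_iff_right.mpr (by rw [add_comm]; exact (hη k).1)
        _ = (m : ℕ) • η := by simp [Finset.sum_const]
    have h2 : ((m : ℕ) • η : ℝ≥0∞) ≠ ∞ := by
      simp only [nsmul_eq_mul]
      exact ENNReal.mul_ne_top (ENNReal.natCast_ne_top m) hηtop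
    calc ((1 : ℝ≥0∞) - s).toReal ≤ ((m : ℕ) • η : ℝ≥0∞).toReal := ENNReal.toReal_mono h2 h1
      _ = (m : ℝ) * η.toReal := by
          simp [nsmul_eq_mul, ENNReal.toReal_mul]
  calc (∑ k, ∫ p, dist p.1 p.2 ∂(ρ k)) + ∫ p, dist p.1 p.2 ∂πr
      ≤ (∑ k, ε * (a k).toReal) + D * ((1 : ℝ≥0∞) - s).toReal :=
        add_le_add (Finset.sum_le_sum fun k _ => hcostk k) hcostr
    _ ≤ ε * 1 + D * ((m : ℝ) * η.toReal) := by
        refine add_le_add ?_ (mul_le_mul_of_nonneg_left h1s_le hDnn)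
        rw [← Finset.mul_sum]
        exact mul_le_mul_of_nonneg_left hsum_a hε
    _ = ε + D * ((m : ℝ) * η.toReal) := by ring

end Partition

section PartitionExists
variable {X : Type*} [MetricSpace X] [CompactSpace X] [MeasurableSpace X] [BorelSpace X]

lemma null_frontier_biUnion {ι : Type*} [DecidableEq ι] (ν : Measure X) (F : Finset ι)
    (B : ι → Set X) (h : ∀ j, ν (frontier (B j)) = 0) :
    ν (frontier (⋃ j ∈ F, B j)) = 0 := by
  induction F using Finset.induction with
  | empty => simp
  | insert _ _ ha ih =>
    rw [Finset.set_biUnion_insert]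
    refine measure_mono_null ((frontier_union_subset _ _).trans
      (union_subset_union inter_subset_left inter_subset_right)) ?_
    exact measure_union_null (h _) ih

lemma exists_good_partition (ν : Measure X) [IsFiniteMeasure ν] {ε : ℝ} (hε : 0 < ε) :
    ∃ (m : ℕ) (A : Fin m → Set X), (∀ k, MeasurableSet (A k)) ∧
      Pairwise (Function.onFun Disjoint A) ∧ (⋃ k, A k) = univ ∧
      (∀ k, ∀ x ∈ A k, ∀ y ∈ A k, dist x y ≤ ε) ∧ ∀ k, ν (frontier (A k)) = 0 := by
  classical
  have hr : ∀ x : X, ∃ rx : ℝ, rx ∈ Ioo (ε/4) (ε/3) ∧ ν (frontier (Metric.ball x rx)) = 0 := by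
    intro x
    obtain ⟨rx, hr1, hr2⟩ := exists_null_frontier_thickening ν {x} (show ε/4 < ε/3 by linarith)
    exact ⟨rx, hr1, by rwa [Metric.thickening_singleton] at hr2⟩
  choose r hr1 hr2 using hr
  obtain ⟨t, ht⟩ := isCompact_univ.elim_finite_subcover (fun x : X => Metric.ball x (r x))
    (fun x => Metric.isOpen_ball)
    (fun x _ => mem_iUnion.mpr ⟨x, Metric.mem_ball_self (by have := (hr1 x).1; linarith)⟩)
  set m := t.card with hm
  set e : Fin m → X := fun k => (t.equivFin.symm k : X) with he
  set B : Fin m → Set X := fun k => Metric.ball (e k) (r (e k)) with hB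
  set A : Fin m → Set X := fun k => B k \ ⋃ j ∈ Finset.univ.filter (fun j => j < k), B j with hA
  have hAsubB : ∀ k, A k ⊆ B k := fun k => diff_subset
  refine ⟨m, A, ?_, ?_, ?_, ?_, ?_⟩
  · intro k
    exact (Metric.isOpen_ball.measurableSet).diff
      (Finset.measurableSet_biUnion _ fun j _ => Metric.isOpen_ball.measurableSet)
  · intro i k hik
    rcases Ne.lt_or_gt hik with h | h
    · refine Set.disjoint_left.mpr fun x hxi hxk => ?_
      exact hxk.2 (mem_biUnion (Finset.mem_filter.mpr ⟨Finset.mem_univ i, h⟩) (hAsubB i hxi))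
    · refine Set.disjoint_left.mpr fun x hxi hxk => ?_
      exact hxi.2 (mem_biUnion (Finset.mem_filter.mpr ⟨Finset.mem_univ k, h⟩) (hAsubB k hxk))
  · refine eq_univ_iff_forall.mpr fun x => ?_
    have hx : x ∈ ⋃ y ∈ t, Metric.ball y (r y) := ht (mem_univ x)
    obtain ⟨y, hyt, hxy⟩ := mem_iUnion₂.mp hx
    have hS : (Finset.univ.filter (fun k => x ∈ B k)).Nonempty := by
      refine ⟨t.equivFin ⟨y, hyt⟩, Finset.mem_filter.mpr ⟨Finset.mem_univ _, ?_⟩⟩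
      rw [hB]
      simp only [he, Equiv.symm_apply_apply]
      exact hxy
    set k0 := (Finset.univ.filter (fun k => x ∈ B k)).min' hS with hk0
    have hxk0 : x ∈ B k0 := by
      have := (Finset.univ.filter (fun k => x ∈ B k)).min'_mem hS
      exact (Finset.mem_filter.mp this).2
    have hxA : x ∈ A k0 := by
      rw [hA]
      refine ⟨hxk0, fun hmem => ?_⟩
      obtain ⟨j, hj, hxj⟩ := mem_iUnion₂.mp hmem
      have hjlt := (Finset.mem_filter.mp hj).2
      have : k0 ≤ j := Finset.min'_le (Finset.univ.filter (fun k : Fin m => x ∈ B k)) j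
        (Finset.mem_filter.mpr ⟨Finset.mem_univ j, hxj⟩)
      exact absurd (lt_of_le_of_lt this hjlt) (lt_irrefl _)
    exact mem_iUnion.mpr ⟨k0, hxA⟩
  · intro k x hx y hy
    have h1 := Metric.mem_ball.mp (hAsubB k hx)
    have h2 := Metric.mem_ball.mp (hAsubB k hy)
    have h3 := (hr1 (e k)).2
    calc dist x y ≤ dist x (e k) + dist (e k) y := dist_triangle _ _ _
      _ ≤ ε := by rw [dist_comm (e k) y] at *; linarith
  · intro k
    refine measure_mono_null (?_ : frontier (A k) ⊆
      frontier (B k) ∪ frontier (⋃ j ∈ Finset.univ.filter (fun j => j < k), B j)) ?_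
    · rw [hA]
      simp only [diff_eq]
      refine (frontier_inter_subset _ _).trans ?_
      apply union_subset_union
      · exact inter_subset_left
      · rw [frontier_compl]
        exact inter_subset_right
    · exact measure_union_null (hr2 _) (null_frontier_biUnion ν _ _ fun j => hr2 _)

end PartitionExists

section Ext
variable {Ω : Type*} [MeasurableSpace Ω] [MetricSpace Ω] [CompactSpace Ω] [BorelSpace Ω]

lemma measure_ext_of_integral (μ1 μ2 : Measure Ω) [IsFiniteMeasure μ1] [IsFiniteMeasure μ2]
    (h : ∀ g : C(Ω, ℝ), ∫ x, g x ∂μ1 = ∫ x, g x ∂μ2) : μ1 = μ2 := by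
  apply ext_of_forall_lintegral_eq_of_IsFiniteMeasure
  intro f
  have hc : Continuous fun x => ((f x : ℝ≥0) : ℝ) := NNReal.continuous_coe.comp f.continuous
  have hint1 : Integrable (fun x => ((f x : ℝ≥0) : ℝ)) μ1 :=
    hc.integrable_of_hasCompactSupport (HasCompactSupport.of_compactSpace _)
  have hint2 : Integrable (fun x => ((f x : ℝ≥0) : ℝ)) μ2 :=
    hc.integrable_of_hasCompactSupport (HasCompactSupport.of_compactSpace _)
  rw [lintegral_coe_eq_integral f hint1, lintegral_coe_eq_integral f hint2]
  exact congrArg ENNReal.ofReal (h ⟨fun x => ((f x : ℝ≥0) : ℝ), hc⟩)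

end Ext

section Emp
variable {E : Type*} [MeasurableSpace E] [MetricSpace E] [BorelSpace E]

lemma integrable_dirac_cont {f : E → ℝ} (hf : Continuous f) (x : E) :
    Integrable f (Measure.dirac x) := by
  refine ⟨hf.aestronglyMeasurable, ?_⟩
  have h : (∫⁻ a, ‖f a‖₊ ∂Measure.dirac x) = ‖f x‖₊ :=
    lintegral_dirac' x (hf.measurable.nnnorm.coe_nnreal_ennreal)
  simp only [HasFiniteIntegral, h]
  exact (lintegral_dirac' x hf.measurable.enorm).trans_lt enorm_lt_top

lemma integral_empirical {N : ℕ} (z : Fin N → E) (f : E → ℝ) (hf : Continuous f) :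
    ∫ x, f x ∂((N : ℝ≥0∞)⁻¹ • ∑ i : Fin N, Measure.dirac (z i)) =
      (N : ℝ)⁻¹ * ∑ i, f (z i) := by
  rw [integral_smul_measure, integral_finset_sum_measure
    (fun i _ => integrable_dirac_cont hf (z i))]
  simp_rw [integral_dirac]
  rw [ENNReal.toReal_inv, ENNReal.toReal_natCast, smul_eq_mul]

lemma isProbabilityMeasure_empirical {N : ℕ} (hN : 1 ≤ N) (z : Fin N → E) :
    IsProbabilityMeasure ((N : ℝ≥0∞)⁻¹ • ∑ i : Fin N, Measure.dirac (z i)) := by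
  constructor
  rw [Measure.smul_apply, Measure.finset_sum_apply]
  simp only [measure_univ (μ := Measure.dirac _)]
  rw [Finset.sum_const, Finset.card_univ, Fintype.card_fin, nsmul_eq_mul, mul_one, smul_eq_mul]
  exact ENNReal.inv_mul_cancel (Nat.cast_ne_zero.mpr (by omega)) (ENNReal.natCast_ne_top N)

lemma isProbabilityMeasure_empirical_erase {N : ℕ} (hN : 2 ≤ N) (z : Fin N → E) (i : Fin N) :
    IsProbabilityMeasure
      (((N : ℝ≥0∞) - 1)⁻¹ • ∑ j ∈ Finset.univ.erase i, Measure.dirac (z j)) := by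
  constructor
  rw [Measure.smul_apply, Measure.finset_sum_apply]
  simp only [measure_univ (μ := Measure.dirac _)]
  rw [Finset.sum_const, Finset.card_erase_of_mem (Finset.mem_univ i), Finset.card_univ,
    Fintype.card_fin, nsmul_eq_mul, mul_one, smul_eq_mul]
  have h1 : ((N - 1 : ℕ) : ℝ≥0∞) = (N : ℝ≥0∞) - 1 := by
    rw [ENNReal.natCast_sub, Nat.cast_one]
  rw [← h1]
  exact ENNReal.inv_mul_cancel (Nat.cast_ne_zero.mpr (by omega)) (ENNReal.natCast_ne_top _)

end Emp

lemma ennreal_le_add_of_toReal {a b c : ℝ≥0∞} (ha : a ≠ ∞) (hb : b ≠ ∞) (hc : c ≠ ∞)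
    (h : a.toReal ≤ b.toReal + c.toReal) : a ≤ b + c := by
  rw [← ENNReal.ofReal_toReal ha, ← ENNReal.ofReal_toReal hb, ← ENNReal.ofReal_toReal hc,
    ← ENNReal.ofReal_add ENNReal.toReal_nonneg ENNReal.toReal_nonneg]
  exact ENNReal.ofReal_le_ofReal h

lemma omega_small {ω : ℝ → ℝ} (hω_mono : Monotone ω) (hω_cont : ContinuousAt ω 0)
    (hω_zero : ω 0 = 0) {r : ℝ} (hr : 0 < r) :
    ∃ δ > 0, ∀ u, 0 ≤ u → u ≤ δ → ω u ≤ r := by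
  have h := Metric.continuousAt_iff.mp hω_cont r hr
  obtain ⟨δ, hδ, hball⟩ := h
  refine ⟨δ / 2, by linarith, fun u hu0 huδ => ?_⟩
  have h2 : dist (δ/2) (0:ℝ) < δ := by
    rw [Real.dist_eq, sub_zero, abs_of_nonneg (by linarith)]; linarith
  have := hball h2
  rw [Real.dist_eq, hω_zero, sub_zero] at this
  calc ω u ≤ ω (δ/2) := hω_mono huδ
    _ ≤ |ω (δ/2)| := le_abs_self _
    _ ≤ r := this.le

set_option maxHeartbeats 2000000 in
/-- **Pure Nash equilibria converge to Cournot-Nash equilibria.**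
Players `i = 1, …, N` have types `θ N i`, common compact metric strategy space `X`, and
costs `Jᵢ^N(x) = F^N(θᵢ, xᵢ, (1/(N-1)) Σ_{j≠i} δ_{xⱼ})`, where the `F^N` are uniformly
equi-continuous on `Θ × X × P(X)` with a common modulus of continuity `ω` (the measure
variable being measured with the 1-Wasserstein metric `W₁`).  If `x̄^N` is a Nash
equilibrium of the `N`-player game, `μ^N, ν^N, γ^N` are the associated empirical
measures, and (up to subsequences) `μ^N ⇀ μ`, `ν^N ⇀ ν`, `γ^N ⇀ γ` weakly-* while
`F^N → F` uniformly on `Θ × X × P(X)`, then `γ` is a Cournot-Nash equilibrium for `F`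
and `μ`: its marginals are `μ` and `ν` and it gives full mass to cost-minimising
strategies. -/
theorem nash_tendsto_cournotNash
    {Θ X : Type*}
    [MetricSpace Θ] [CompactSpace Θ] [MeasurableSpace Θ] [BorelSpace Θ]
    [MetricSpace X] [CompactSpace X] [MeasurableSpace X] [BorelSpace X]
    (θ : (N : ℕ) → Fin N → Θ)
    (F : ℕ → Θ → X → Measure X → ℝ) (Flim : Θ → X → Measure X → ℝ)
    (ω : ℝ → ℝ) (hω_mono : Monotone ω) (hω_cont : ContinuousAt ω 0) (hω_zero : ω 0 = 0)
    (hF_mod : ∀ (N : ℕ) (t t' : Θ) (x x' : X) (ν ν' : Measure X),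
      IsProbabilityMeasure ν → IsProbabilityMeasure ν' →
      |F N t x ν - F N t' x' ν'| ≤ ω (dist t t') + ω (dist x x') + ω (W1 ν ν'))
    (xbar : (N : ℕ) → Fin N → X)
    (hNash : ∀ N, 2 ≤ N → ∀ i : Fin N, ∀ y : X,
      F N (θ N i) (xbar N i)
          (((N : ℝ≥0∞) - 1)⁻¹ • ∑ j ∈ Finset.univ.erase i, Measure.dirac (xbar N j)) ≤
        F N (θ N i) y
          (((N : ℝ≥0∞) - 1)⁻¹ • ∑ j ∈ Finset.univ.erase i, Measure.dirac (xbar N j)))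
    (μ : Measure Θ) (ν : Measure X) (γ : Measure (Θ × X))
    [IsProbabilityMeasure μ] [IsProbabilityMeasure ν] [IsProbabilityMeasure γ]
    (hμ : ∀ g : C(Θ, ℝ), Tendsto
      (fun N : ℕ => ∫ t, g t ∂((N : ℝ≥0∞)⁻¹ • ∑ i : Fin N, Measure.dirac (θ N i)))
      atTop (𝓝 (∫ t, g t ∂μ)))
    (hν : ∀ g : C(X, ℝ), Tendsto
      (fun N : ℕ => ∫ x, g x ∂((N : ℝ≥0∞)⁻¹ • ∑ i : Fin N, Measure.dirac (xbar N i)))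
      atTop (𝓝 (∫ x, g x ∂ν)))
    (hγ : ∀ g : C(Θ × X, ℝ), Tendsto
      (fun N : ℕ => ∫ p, g p ∂((N : ℝ≥0∞)⁻¹ • ∑ i : Fin N, Measure.dirac (θ N i, xbar N i)))
      atTop (𝓝 (∫ p, g p ∂γ)))
    (hFconv : TendstoUniformlyOn (fun N p => F N p.1 p.2.1 p.2.2)
      (fun p => Flim p.1 p.2.1 p.2.2) atTop
      {p : Θ × X × Measure X | IsProbabilityMeasure p.2.2}) :
    γ.map Prod.fst = μ ∧ γ.map Prod.snd = ν ∧
      γ {p : Θ × X | ∀ y : X, Flim p.1 p.2 ν ≤ Flim p.1 y ν} = 1 := by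
  classical
  have hνprob : IsProbabilityMeasure ν := inferInstance
  -- ### Part 1 : marginals
  have hfst : γ.map Prod.fst = μ := by
    haveI : IsProbabilityMeasure (γ.map Prod.fst) :=
      Measure.isProbabilityMeasure_map measurable_fst.aemeasurable
    apply measure_ext_of_integral
    intro g
    have hgf : Continuous fun p : Θ × X => g p.1 := g.continuous.comp continuous_fst
    have h2 := hγ ⟨fun p => g p.1, hgf⟩
    have hcomp : (fun N : ℕ => ∫ p, g p.1
        ∂((N : ℝ≥0∞)⁻¹ • ∑ i : Fin N, Measure.dirac (θ N i, xbar N i))) =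
        (fun N : ℕ => ∫ t, g t ∂((N : ℝ≥0∞)⁻¹ • ∑ i : Fin N, Measure.dirac (θ N i))) := by
      funext N
      rw [integral_empirical (fun i : Fin N => (θ N i, xbar N i)) (fun p => g p.1) hgf,
        integral_empirical (θ N) (fun t => g t) g.continuous]
    simp only [ContinuousMap.coe_mk] at h2
    rw [hcomp] at h2
    have h3 : ∫ p, g p.1 ∂γ = ∫ t, g t ∂(γ.map Prod.fst) :=
      (integral_map measurable_fst.aemeasurable g.continuous.aestronglyMeasurable).symm
    rw [h3] at h2
    exact tendsto_nhds_unique h2 (hμ g)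
  have hsnd : γ.map Prod.snd = ν := by
    haveI : IsProbabilityMeasure (γ.map Prod.snd) :=
      Measure.isProbabilityMeasure_map measurable_snd.aemeasurable
    apply measure_ext_of_integral
    intro g
    have hgf : Continuous fun p : Θ × X => g p.2 := g.continuous.comp continuous_snd
    have h2 := hγ ⟨fun p => g p.2, hgf⟩
    have hcomp : (fun N : ℕ => ∫ p, g p.2
        ∂((N : ℝ≥0∞)⁻¹ • ∑ i : Fin N, Measure.dirac (θ N i, xbar N i))) =
        (fun N : ℕ => ∫ x, g x ∂((N : ℝ≥0∞)⁻¹ • ∑ i : Fin N, Measure.dirac (xbar N i))) := by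
      funext N
      rw [integral_empirical (fun i : Fin N => (θ N i, xbar N i)) (fun p => g p.2) hgf,
        integral_empirical (xbar N) (fun x => g x) g.continuous]
    simp only [ContinuousMap.coe_mk] at h2
    rw [hcomp] at h2
    have h3 : ∫ p, g p.2 ∂γ = ∫ x, g x ∂(γ.map Prod.snd) :=
      (integral_map measurable_snd.aemeasurable g.continuous.aestronglyMeasurable).symm
    rw [h3] at h2
    exact tendsto_nhds_unique h2 (hν g)
  refine ⟨hfst, hsnd, ?_⟩
  -- ### Part 2 : limit modulus of continuity
  have hW1self : W1 ν ν = 0 := W1_self ν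
  have hFptwise : ∀ t x, Tendsto (fun N => F N t x ν) atTop (𝓝 (Flim t x ν)) := fun t x =>
    hFconv.tendsto_at (show IsProbabilityMeasure ((t, x, ν) : Θ × X × Measure X).2.2 from hνprob)
  have hFlim_mod : ∀ t t' x x', |Flim t x ν - Flim t' x' ν| ≤ ω (dist t t') + ω (dist x x') := by
    intro t t' x x'
    have hbd : ∀ N, |F N t x ν - F N t' x' ν| ≤ ω (dist t t') + ω (dist x x') := by
      intro N
      have := hF_mod N t t' x x' ν ν hνprob hνprob
      rwa [hW1self, hω_zero, add_zero] at this
    have htend : Tendsto (fun N => |F N t x ν - F N t' x' ν|) atTop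
        (𝓝 |Flim t x ν - Flim t' x' ν|) := ((hFptwise t x).sub (hFptwise t' x')).abs
    exact le_of_tendsto htend (Eventually.of_forall hbd)
  -- continuity of Flim in (t, x)
  have hFlimc1 : Continuous (fun p : Θ × X => Flim p.1 p.2 ν) := by
    rw [Metric.continuous_iff]
    intro b ε hε
    obtain ⟨δ, hδpos, hδ⟩ := omega_small hω_mono hω_cont hω_zero (show (0:ℝ) < ε/3 by linarith)
    refine ⟨δ, hδpos, fun a hab => ?_⟩
    rw [Prod.dist_eq] at hab
    obtain ⟨h1, h2⟩ := max_lt_iff.mp hab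
    rw [Real.dist_eq]
    calc |Flim a.1 a.2 ν - Flim b.1 b.2 ν| ≤ ω (dist a.1 b.1) + ω (dist a.2 b.2) :=
          hFlim_mod _ _ _ _
      _ ≤ ε/3 + ε/3 := add_le_add (hδ _ dist_nonneg h1.le) (hδ _ dist_nonneg h2.le)
      _ < ε := by linarith
  have hFlimc2 : ∀ y : X, Continuous (fun p : Θ × X => Flim p.1 y ν) := by
    intro y
    rw [Metric.continuous_iff]
    intro b ε hε
    obtain ⟨δ, hδpos, hδ⟩ := omega_small hω_mono hω_cont hω_zero (show (0:ℝ) < ε/2 by linarith)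
    refine ⟨δ, hδpos, fun a hab => ?_⟩
    rw [Prod.dist_eq] at hab
    obtain ⟨h1, -⟩ := max_lt_iff.mp hab
    rw [Real.dist_eq]
    calc |Flim a.1 y ν - Flim b.1 y ν| ≤ ω (dist a.1 b.1) + ω (dist y y) := hFlim_mod _ _ _ _
      _ = ω (dist a.1 b.1) + 0 := by rw [dist_self, hω_zero]
      _ ≤ ε/2 := by rw [add_zero]; exact hδ _ dist_nonneg h1.le
      _ < ε := by linarith
  -- ### Part 3 : the uniform W1 bound
  have hW1hat : ∀ δ : ℝ, 0 < δ → ∀ᶠ N in atTop, ∀ i : Fin N,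
      0 ≤ W1 (((N : ℝ≥0∞) - 1)⁻¹ • ∑ j ∈ Finset.univ.erase i, Measure.dirac (xbar N j)) ν ∧
      W1 (((N : ℝ≥0∞) - 1)⁻¹ • ∑ j ∈ Finset.univ.erase i, Measure.dirac (xbar N j)) ν ≤ δ := by
    intro δ hδ
    obtain ⟨m, A, hmeas, hdisj, hcover, hdiam, hfront⟩ := exists_good_partition ν (half_pos hδ)
    set D := Metric.diam (univ : Set X) with hD
    have hDnn : 0 ≤ D := Metric.diam_nonneg
    set η'' : ℝ := δ / (2 * ((m : ℝ) + 1) * (D + 1)) with hη''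
    have hη''pos : 0 < η'' := by
      apply div_pos hδ
      positivity
    set η1 : ℝ≥0∞ := ENNReal.ofReal (η'' / 2) with hη1
    have hη1ne : η1 ≠ 0 := by
      simp only [hη1, ne_eq, ENNReal.ofReal_eq_zero, not_le]
      linarith
    have hη1fin : η1 ≠ ∞ := ENNReal.ofReal_ne_top
    -- probability measures and weak convergence
    set P : ℕ → ProbabilityMeasure X := fun N =>
      if h : N = 0 then ⟨ν, hνprob⟩
      else ⟨(N : ℝ≥0∞)⁻¹ • ∑ i : Fin N, Measure.dirac (xbar N i),
        isProbabilityMeasure_empirical (by omega) _⟩ with hP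
    have hPcoe : ∀ N : ℕ, N ≠ 0 →
        (P N : Measure X) = (N : ℝ≥0∞)⁻¹ • ∑ i : Fin N, Measure.dirac (xbar N i) := by
      intro N hN
      simp only [hP, hN, ↓reduceDIte]
      rfl
    have hPtend : Tendsto P atTop (𝓝 (⟨ν, hνprob⟩ : ProbabilityMeasure X)) := by
      refine ProbabilityMeasure.tendsto_iff_forall_integral_tendsto.mpr ?_
      intro f
      refine Tendsto.congr' ?_ (hν f.toContinuousMap)
      filter_upwards [eventually_ge_atTop 1] with N hN
      rw [hPcoe N (by omega)]
      rfl
    have hAk : ∀ k, Tendsto (fun N => (P N : Measure X) (A k)) atTop (𝓝 (ν (A k))) := fun k =>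
      ProbabilityMeasure.tendsto_measure_of_null_frontier_of_tendsto' hPtend (hfront k)
    have hev1 : ∀ᶠ N in atTop, ∀ k, (P N : Measure X) (A k) ≤ ν (A k) + η1 ∧
        ν (A k) ≤ (P N : Measure X) (A k) + η1 := by
      rw [eventually_all]
      intro k
      have hmem : Icc (ν (A k) - η1) (ν (A k) + η1) ∈ 𝓝 (ν (A k)) :=
        ENNReal.Icc_mem_nhds (measure_ne_top ν _) hη1ne
      filter_upwards [(hAk k).eventually hmem] with N hN
      exact ⟨hN.2, tsub_le_iff_right.mp hN.1⟩
    have hev2 : ∀ᶠ N : ℕ in atTop, 2 ≤ N ∧ (2 : ℝ) / ((N : ℝ) - 1) ≤ η'' / 2 := by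
      filter_upwards [eventually_ge_atTop (⌈(4 : ℝ) / η''⌉₊ + 2)] with N hN
      have hN2 : 2 ≤ N := le_trans (by omega) hN
      refine ⟨hN2, ?_⟩
      have h1 : (4 : ℝ) / η'' ≤ ⌈(4 : ℝ) / η''⌉₊ := Nat.le_ceil _
      have h2 : ((⌈(4 : ℝ) / η''⌉₊ + 2 : ℕ) : ℝ) ≤ (N : ℝ) := Nat.cast_le.mpr hN
      push_cast at h2
      have hn1 : (0 : ℝ) < (N : ℝ) - 1 := by linarith
      rw [div_le_iff₀ hn1]
      have h3 : (4 : ℝ) ≤ η'' * ((N : ℝ) - 1) := by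
        calc (4 : ℝ) = η'' * ((4 : ℝ) / η'') := by field_simp
          _ ≤ η'' * ((N : ℝ) - 1) := by
              apply mul_le_mul_of_nonneg_left _ hη''pos.le
              linarith
      linarith
    filter_upwards [hev1, hev2] with N hN1 hN2
    intro i
    obtain ⟨hN2', hN2''⟩ := hN2
    haveI hhatprob := isProbabilityMeasure_empirical_erase hN2' (xbar N) i
    set σ : Measure X := ((N : ℝ≥0∞) - 1)⁻¹ • ∑ j ∈ Finset.univ.erase i, Measure.dirac (xbar N j)
      with hσ
    refine ⟨W1_nonneg _ _, ?_⟩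
    -- per-cell comparison between σ and the full empirical measure
    have hPN := hPcoe N (by omega)
    have hcell : ∀ k, σ (A k) ≤ ν (A k) + (η1 + η1) ∧ ν (A k) ≤ σ (A k) + (η1 + η1) := by
      intro k
      set c : ℝ≥0∞ := ∑ j : Fin N, Measure.dirac (xbar N j) (A k) with hc
      set ci : ℝ≥0∞ := ∑ j ∈ Finset.univ.erase i, Measure.dirac (xbar N j) (A k) with hci
      have hsplit : ci + Measure.dirac (xbar N i) (A k) = c :=
        Finset.sum_erase_add _ _ (Finset.mem_univ i)
      have hdle : ∀ j : Fin N, Measure.dirac (xbar N j) (A k) ≤ 1 := fun j => prob_le_one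
      have hcle : c ≤ (N : ℝ≥0∞) := by
        rw [hc]
        calc ∑ j : Fin N, Measure.dirac (xbar N j) (A k) ≤ ∑ _j : Fin N, 1 :=
              Finset.sum_le_sum fun j _ => hdle j
          _ = (N : ℝ≥0∞) := by simp
      have hcile : ci ≤ c := by
        rw [← hsplit]; exact le_add_right le_rfl
      have hcci : c ≤ ci + 1 := by
        rw [← hsplit]; exact add_le_add le_rfl (hdle i)
      have hcfin : c ≠ ∞ := (lt_of_le_of_lt hcle (ENNReal.natCast_lt_top N)).ne
      have hcifin : ci ≠ ∞ := (lt_of_le_of_lt (hcile.trans hcle) (ENNReal.natCast_lt_top N)).ne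
      have hσval : σ (A k) = ((N : ℝ≥0∞) - 1)⁻¹ * ci := by
        rw [hσ, Measure.smul_apply, Measure.finset_sum_apply, smul_eq_mul]
      have hPval : (P N : Measure X) (A k) = (N : ℝ≥0∞)⁻¹ * c := by
        rw [hPN, Measure.smul_apply, Measure.finset_sum_apply, smul_eq_mul]
      have hn1le : (1 : ℝ≥0∞) ≤ (N : ℝ≥0∞) := by
        exact_mod_cast Nat.one_le_cast.mpr (by omega)
      have hNsub : ((N : ℝ≥0∞) - 1).toReal = (N : ℝ) - 1 := by
        rw [ENNReal.toReal_sub_of_le hn1le (ENNReal.natCast_ne_top N)]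
        simp
      have hn1pos : (0 : ℝ) < (N : ℝ) - 1 := by
        have : (2 : ℝ) ≤ (N : ℝ) := by exact_mod_cast hN2'
        linarith
      have hNpos : (0 : ℝ) < (N : ℝ) := by linarith
      have hσreal : (σ (A k)).toReal = ci.toReal / ((N : ℝ) - 1) := by
        rw [hσval, ENNReal.toReal_mul, ENNReal.toReal_inv, hNsub, div_eq_inv_mul]
      have hPreal : ((P N : Measure X) (A k)).toReal = c.toReal / (N : ℝ) := by
        rw [hPval, ENNReal.toReal_mul, ENNReal.toReal_inv, ENNReal.toReal_natCast, div_eq_inv_mul]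
      have huui : ci.toReal ≤ c.toReal := ENNReal.toReal_mono hcfin hcile
      have huc : c.toReal ≤ ci.toReal + 1 := by
        have h := ENNReal.toReal_mono (ENNReal.add_ne_top.mpr ⟨hcifin, ENNReal.one_ne_top⟩) hcci
        rwa [ENNReal.toReal_add hcifin ENNReal.one_ne_top, ENNReal.toReal_one] at h
      have hun : c.toReal ≤ (N : ℝ) := by
        have h := ENNReal.toReal_mono (ENNReal.natCast_ne_top N) hcle
        rwa [ENNReal.toReal_natCast] at h
      have huin : (0 : ℝ) ≤ ci.toReal := ENNReal.toReal_nonneg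
      have key1 : ci.toReal / ((N : ℝ) - 1) ≤ c.toReal / (N : ℝ) + η'' / 2 := by
        have ha : (ci.toReal - 2) / ((N : ℝ) - 1) ≤ c.toReal / (N : ℝ) := by
          rw [div_le_div_iff₀ hn1pos hNpos]
          nlinarith
        have hb : ci.toReal / ((N : ℝ) - 1) =
            (ci.toReal - 2) / ((N : ℝ) - 1) + 2 / ((N : ℝ) - 1) := by
          rw [← add_div, sub_add_cancel]
        rw [hb]
        exact add_le_add ha hN2''
      have key2 : c.toReal / (N : ℝ) ≤ ci.toReal / ((N : ℝ) - 1) + η'' / 2 := by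
        have ha : c.toReal / (N : ℝ) ≤ (ci.toReal + 2) / ((N : ℝ) - 1) := by
          rw [div_le_div_iff₀ hNpos hn1pos]
          nlinarith
        have hb : (ci.toReal + 2) / ((N : ℝ) - 1) =
            ci.toReal / ((N : ℝ) - 1) + 2 / ((N : ℝ) - 1) := by
          field_simp
        rw [hb] at ha
        exact ha.trans (add_le_add le_rfl hN2'')
      have hσfin : σ (A k) ≠ ∞ := measure_ne_top σ _
      have hPfin : (P N : Measure X) (A k) ≠ ∞ := measure_ne_top _ _
      have hη1real : η1.toReal = η'' / 2 := ENNReal.toReal_ofReal (by linarith)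
      have hstep1 : σ (A k) ≤ (P N : Measure X) (A k) + η1 := by
        refine ennreal_le_add_of_toReal hσfin hPfin hη1fin ?_
        rw [hσreal, hPreal, hη1real]; exact key1
      have hstep2 : (P N : Measure X) (A k) ≤ σ (A k) + η1 := by
        refine ennreal_le_add_of_toReal hPfin hσfin hη1fin ?_
        rw [hσreal, hPreal, hη1real]; exact key2
      obtain ⟨hPν1, hPν2⟩ := hN1 k
      constructor
      · calc σ (A k) ≤ (P N : Measure X) (A k) + η1 := hstep1
          _ ≤ (ν (A k) + η1) + η1 := add_le_add hPν1 le_rfl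
          _ = ν (A k) + (η1 + η1) := by rw [add_assoc]
      · calc ν (A k) ≤ (P N : Measure X) (A k) + η1 := hPν2
          _ ≤ (σ (A k) + η1) + η1 := add_le_add hstep2 le_rfl
          _ = σ (A k) + (η1 + η1) := by rw [add_assoc]
    have hηη : η1 + η1 = ENNReal.ofReal η'' := by
      rw [hη1, ← ENNReal.ofReal_add (by linarith) (by linarith)]
      congr 1
      ring
    have hbound := W1_le_of_partition σ ν A hmeas hdisj hcover (le_of_lt (half_pos hδ)) hdiam
      (η := η1 + η1) (by rw [hηη]; exact ENNReal.ofReal_ne_top) hcell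
    rw [hηη, ENNReal.toReal_ofReal hη''pos.le] at hbound
    refine hbound.trans ?_
    have hfinal : D * ((m : ℝ) * η'') ≤ δ / 2 := by
      have hq : (0 : ℝ) < 2 * ((m : ℝ) + 1) * (D + 1) := by positivity
      have heq : D * ((m : ℝ) * η'') = δ * (D * (m : ℝ)) / (2 * ((m : ℝ) + 1) * (D + 1)) := by
        rw [hη'']
        ring
      rw [heq, div_le_iff₀ hq]
      have hmn : (0 : ℝ) ≤ (m : ℝ) := Nat.cast_nonneg m
      nlinarith
    linarith
  -- ### Part 4 : the per-y inequality holds γ-a.e.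
  have hy_meas : ∀ y : X, 1 ≤ γ {p : Θ × X | Flim p.1 p.2 ν ≤ Flim p.1 y ν} := by
    intro y
    have hgc : Continuous (fun p : Θ × X => max (Flim p.1 p.2 ν - Flim p.1 y ν) 0) :=
      (hFlimc1.sub (hFlimc2 y)).max continuous_const
    set g : C(Θ × X, ℝ) := ⟨fun p => max (Flim p.1 p.2 ν - Flim p.1 y ν) 0, hgc⟩ with hg
    have htend := hγ g
    have hbound : ∀ r : ℝ, 0 < r → ∀ᶠ N : ℕ in atTop,
        (∫ p, g p ∂((N : ℝ≥0∞)⁻¹ • ∑ i : Fin N, Measure.dirac (θ N i, xbar N i))) ≤ r := by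
      intro r hr
      obtain ⟨δ, hδpos, hδ⟩ := omega_small hω_mono hω_cont hω_zero (show (0:ℝ) < r/4 by linarith)
      have hunif := (Metric.tendstoUniformlyOn_iff.mp hFconv) (r/4) (by linarith)
      filter_upwards [hW1hat δ hδpos, hunif, eventually_ge_atTop 2] with N hW hU hN2
      have hterm : ∀ i : Fin N, g (θ N i, xbar N i) ≤ r := by
        intro i
        haveI hhatprob := isProbabilityMeasure_empirical_erase hN2 (xbar N) i
        obtain ⟨hw0, hwδ⟩ := hW i
        have hωb : ω (W1 (((N : ℝ≥0∞) - 1)⁻¹ •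
            ∑ j ∈ Finset.univ.erase i, Measure.dirac (xbar N j)) ν) ≤ r/4 := hδ _ hw0 hwδ
        have hU1 : |Flim (θ N i) (xbar N i) ν - F N (θ N i) (xbar N i) ν| < r/4 := by
          have := hU (θ N i, (xbar N i, ν)) hνprob
          simpa [Real.dist_eq] using this
        have hU2 : |Flim (θ N i) y ν - F N (θ N i) y ν| < r/4 := by
          have := hU (θ N i, (y, ν)) hνprob
          simpa [Real.dist_eq] using this
        have hm1 : |F N (θ N i) (xbar N i) (((N : ℝ≥0∞) - 1)⁻¹ •
            ∑ j ∈ Finset.univ.erase i, Measure.dirac (xbar N j)) -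
            F N (θ N i) (xbar N i) ν| ≤ ω (W1 (((N : ℝ≥0∞) - 1)⁻¹ •
            ∑ j ∈ Finset.univ.erase i, Measure.dirac (xbar N j)) ν) := by
          have := hF_mod N (θ N i) (θ N i) (xbar N i) (xbar N i) _ ν hhatprob hνprob
          simpa [dist_self, hω_zero] using this
        have hm2 : |F N (θ N i) y (((N : ℝ≥0∞) - 1)⁻¹ •
            ∑ j ∈ Finset.univ.erase i, Measure.dirac (xbar N j)) -
            F N (θ N i) y ν| ≤ ω (W1 (((N : ℝ≥0∞) - 1)⁻¹ •
            ∑ j ∈ Finset.univ.erase i, Measure.dirac (xbar N j)) ν) := by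
          have := hF_mod N (θ N i) (θ N i) y y _ ν hhatprob hνprob
          simpa [dist_self, hω_zero] using this
        have hNash' := hNash N hN2 i y
        have ha1 := abs_le.mp hm1
        have ha2 := abs_le.mp hm2
        have hb1 := abs_le.mp hU1.le
        have hb2 := abs_le.mp hU2.le
        have hd : Flim (θ N i) (xbar N i) ν - Flim (θ N i) y ν ≤ r := by
          linarith [ha1.1, ha1.2, ha2.1, ha2.2, hb1.1, hb1.2, hb2.1, hb2.2]
        simp only [hg, ContinuousMap.coe_mk]
        exact max_le hd hr.le
      rw [integral_empirical (fun i : Fin N => (θ N i, xbar N i)) _ g.continuous]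
      have hNpos : (0 : ℝ) < (N : ℝ) := by
        have : (2 : ℝ) ≤ (N : ℝ) := by exact_mod_cast hN2
        linarith
      calc (N : ℝ)⁻¹ * ∑ i, g (θ N i, xbar N i) ≤ (N : ℝ)⁻¹ * ∑ _i : Fin N, r := by
            apply mul_le_mul_of_nonneg_left _ (by positivity)
            exact Finset.sum_le_sum fun i _ => hterm i
        _ = r := by
            rw [Finset.sum_const, Finset.card_univ, Fintype.card_fin, nsmul_eq_mul]
            field_simp
    have hle : ∫ p, g p ∂γ ≤ 0 := by
      by_contra hpos
      push_neg at hpos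
      have := le_of_tendsto htend (hbound ((∫ p, g p ∂γ) / 2) (by linarith))
      linarith
    have hge : 0 ≤ ∫ p, g p ∂γ := integral_nonneg fun p => le_max_right _ _
    have hzero : ∫ p, g p ∂γ = 0 := le_antisymm hle hge
    have hint : Integrable g γ :=
      g.continuous.integrable_of_hasCompactSupport (HasCompactSupport.of_compactSpace _)
    have haezero : (fun p => g p) =ᵐ[γ] 0 :=
      (integral_eq_zero_iff_of_nonneg (fun p => le_max_right _ _) hint).mp hzero
    have hsub : {p : Θ × X | g p = 0} ⊆ {p : Θ × X | Flim p.1 p.2 ν ≤ Flim p.1 y ν} := by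
      intro p hp
      simp only [mem_setOf_eq, hg, ContinuousMap.coe_mk] at hp ⊢
      by_contra hlt
      push_neg at hlt
      have h1 : 0 < Flim p.1 p.2 ν - Flim p.1 y ν := by linarith
      have h2 : 0 < max (Flim p.1 p.2 ν - Flim p.1 y ν) 0 := lt_max_of_lt_left h1
      rw [hp] at h2
      exact lt_irrefl 0 h2
    have h1 : γ {p : Θ × X | ¬ g p = 0} = 0 := by
      have h := haezero
      rw [EventuallyEq, ae_iff] at h
      simpa using h
    calc (1 : ℝ≥0∞) = γ univ := measure_univ.symm
      _ ≤ γ ({p : Θ × X | g p = 0} ∪ {p : Θ × X | ¬ g p = 0}) := by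
          apply measure_mono
          intro p _
          by_cases h : g p = 0
          · exact mem_union_left _ h
          · exact mem_union_right _ h
      _ ≤ γ {p : Θ × X | g p = 0} + γ {p : Θ × X | ¬ g p = 0} := measure_union_le _ _
      _ = γ {p : Θ × X | g p = 0} := by rw [h1, add_zero]
      _ ≤ γ {p : Θ × X | Flim p.1 p.2 ν ≤ Flim p.1 y ν} := measure_mono hsub
  -- ### Part 5 : countable dense set and conclusion
  obtain ⟨Dset, hDcount, hDdense⟩ := TopologicalSpace.exists_countable_dense X
  have hmeas_y : ∀ y : X, MeasurableSet {p : Θ × X | Flim p.1 p.2 ν ≤ Flim p.1 y ν} :=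
    fun y => measurableSet_le hFlimc1.measurable (hFlimc2 y).measurable
  have hiInter_meas : MeasurableSet
      (⋂ y ∈ Dset, {p : Θ × X | Flim p.1 p.2 ν ≤ Flim p.1 y ν}) :=
    MeasurableSet.biInter hDcount fun y _ => hmeas_y y
  have hinter : 1 ≤ γ (⋂ y ∈ Dset, {p : Θ × X | Flim p.1 p.2 ν ≤ Flim p.1 y ν}) := by
    have hcompl : γ (⋃ y ∈ Dset, {p : Θ × X | Flim p.1 p.2 ν ≤ Flim p.1 y ν}ᶜ) = 0 := by
      refine (measure_biUnion_null_iff hDcount).mpr fun y _ => ?_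
      have h2 : γ {p : Θ × X | Flim p.1 p.2 ν ≤ Flim p.1 y ν} = 1 :=
        le_antisymm prob_le_one (hy_meas y)
      rw [measure_compl (hmeas_y y) (measure_ne_top γ _), h2, measure_univ, tsub_self]
    have hcompl2 : γ ((⋂ y ∈ Dset, {p : Θ × X | Flim p.1 p.2 ν ≤ Flim p.1 y ν})ᶜ) = 0 := by
      rw [compl_iInter₂]
      exact hcompl
    have h3 := measure_compl hiInter_meas (measure_ne_top γ _)
    rw [hcompl2, measure_univ] at h3
    exact tsub_eq_zero_iff_le.mp h3.symm
  have hsubset : (⋂ y ∈ Dset, {p : Θ × X | Flim p.1 p.2 ν ≤ Flim p.1 y ν}) ⊆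
      {p : Θ × X | ∀ y : X, Flim p.1 p.2 ν ≤ Flim p.1 y ν} := by
    intro p hp
    simp only [mem_setOf_eq]
    intro y
    by_contra hlt
    push_neg at hlt
    have hρpos : 0 < (Flim p.1 p.2 ν - Flim p.1 y ν) / 2 := by linarith
    obtain ⟨δ, hδpos, hδ⟩ := omega_small hω_mono hω_cont hω_zero hρpos
    obtain ⟨y', hy'D, hy'dist⟩ : ∃ y' ∈ Dset, dist y' y < δ := by
      have hcl : y ∈ closure Dset := hDdense y
      rw [Metric.mem_closure_iff] at hcl
      obtain ⟨b, hb, hbd⟩ := hcl δ hδpos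
      exact ⟨b, hb, by rwa [dist_comm]⟩
    have h1 : Flim p.1 p.2 ν ≤ Flim p.1 y' ν := by
      have := mem_iInter₂.mp hp y' hy'D
      exact this
    have h2 : |Flim p.1 y' ν - Flim p.1 y ν| ≤ ω (dist y' y) := by
      have := hFlim_mod p.1 p.1 y' y
      rwa [dist_self, hω_zero, zero_add] at this
    have h3 : ω (dist y' y) ≤ (Flim p.1 p.2 ν - Flim p.1 y ν) / 2 :=
      hδ _ dist_nonneg hy'dist.le
    have h4 := abs_le.mp h2
    linarith [h4.1, h4.2]
  exact le_antisymm prob_le_one (le_trans hinter (measure_mono hsubset))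
end

section
/- Let Θ and X be compact metric spaces, N ≥ 2, θ_1,…,θ_N ∈ Θ, and let F^N : Θ × X × P(X) → ℝ admit a modulus of continuity ω in its third argument with respect to the 1-Wasserstein metric, uniformly in the first two arguments. Let x̄^N = (x_1^N,…,x_N^N) be a Nash equilibrium of the game with costs J_i^N(x_i,x_{-i}) = F^N(θ_i, x_i, (1/(N−1)) Σ_{j≠i} δ_{x_j}), and set μ^N := (1/N) Σ_i δ_{θ_i}, ν^N := (1/N) Σ_i δ_{x_i^N}, γ^N := (1/N) Σ_i δ_{(θ_i, x_i^N)}. Then ∫_{Θ×X} F^N(θ, x, ν^N) γ^N(dθ,dx) ≤ ∫_Θ min_{y∈X} F^N(θ, y, ν^N) μ^N(dθ) + ε_N, where ε_N := 2 ω(diam(X)/N). -/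
open MeasureTheory
open scoped ENNReal NNReal

section Aux
variable {α β ι : Type*} [MeasurableSpace α] [MeasurableSpace β]

lemma my_integrable_dirac [MeasurableSingletonClass α] (f : α → ℝ) (a : α) :
    Integrable f (Measure.dirac a) :=
  (integrable_const (f a)).congr (by
    rw [Filter.EventuallyEq, ae_dirac_eq]
    exact Filter.eventually_pure.2 rfl)

lemma my_integral_sum_dirac [MeasurableSingletonClass α] (s : Finset ι) (a : ι → α) (f : α → ℝ) :
    ∫ x, f x ∂(∑ i ∈ s, Measure.dirac (a i)) = ∑ i ∈ s, f (a i) := by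
  rw [integral_finset_sum_measure (fun i _ => my_integrable_dirac f (a i))]
  simp [integral_dirac]

lemma my_integral_sum_smul_dirac [MeasurableSingletonClass α] (s : Finset ι)
    (c : ι → ℝ≥0∞) (hc : ∀ i ∈ s, c i ≠ ⊤) (a : ι → α) (f : α → ℝ) :
    ∫ x, f x ∂(∑ i ∈ s, c i • Measure.dirac (a i)) = ∑ i ∈ s, (c i).toReal * f (a i) := by
  rw [integral_finset_sum_measure (fun i hi => (my_integrable_dirac f (a i)).smul_measure (hc i hi))]
  simp [integral_smul_measure, integral_dirac, smul_eq_mul]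

lemma my_map_sum_smul_dirac (s : Finset ι) (c : ι → ℝ≥0∞) (p : ι → α) {f : α → β}
    (hf : Measurable f) :
    ((∑ j ∈ s, c j • Measure.dirac (p j)).map f) = ∑ j ∈ s, c j • Measure.dirac (f (p j)) := by
  classical
  induction s using Finset.induction_on with
  | empty => simp [Measure.map_zero]
  | insert _ _ hni ih =>
    rw [Finset.sum_insert hni, Measure.map_add _ _ hf, Measure.map_smul,
      Measure.map_dirac' hf, ih, Finset.sum_insert hni]

lemma my_W1_le_integral {X : Type*} [MeasurableSpace X] [PseudoMetricSpace X]
    {μ ν : Measure X} {γ : Measure (X × X)} (hγ : γ ∈ Couplings μ ν) :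
    W1 μ ν ≤ ∫ p, dist p.1 p.2 ∂γ := by
  apply csInf_le
  · exact ⟨0, by rintro r ⟨γ', _, rfl⟩; exact integral_nonneg fun p => dist_nonneg⟩
  · exact ⟨γ, hγ, rfl⟩

end Aux

lemma my_W1_swap_le {X : Type*} [MetricSpace X] [CompactSpace X] [MeasurableSpace X] [BorelSpace X]
    {μ ν : Measure X} {γ : Measure (X × X)} (hγ : γ ∈ Couplings μ ν) :
    W1 ν μ ≤ ∫ p, dist p.1 p.2 ∂γ := by
  obtain ⟨hprob, h1, h2⟩ := hγ
  have hswap : Measurable (Prod.swap : X × X → X × X) := measurable_swap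
  have hmem : γ.map Prod.swap ∈ Couplings ν μ := by
    refine ⟨Measure.isProbabilityMeasure_map hswap.aemeasurable, ?_, ?_⟩
    · rw [Measure.map_map measurable_fst hswap]; exact h2
    · rw [Measure.map_map measurable_snd hswap]; exact h1
  have hmeas : StronglyMeasurable (fun p : X × X => dist p.1 p.2) :=
    (continuous_fst.dist continuous_snd).stronglyMeasurable
  calc W1 ν μ ≤ ∫ p, dist p.1 p.2 ∂(γ.map Prod.swap) := my_W1_le_integral hmem
    _ = ∫ p, dist (Prod.swap p).1 (Prod.swap p).2 ∂γ :=
        integral_map hswap.aemeasurable hmeas.aestronglyMeasurable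
    _ = ∫ p, dist p.1 p.2 ∂γ := by simp [dist_comm]

lemma my_coupling (N : ℕ) (hN : 2 ≤ N) {X : Type*}
    [MetricSpace X] [CompactSpace X] [MeasurableSpace X] [BorelSpace X]
    (x : Fin N → X) (i : Fin N) :
    ∃ γ ∈ Couplings ((N : ℝ≥0∞)⁻¹ • ∑ j : Fin N, Measure.dirac (x j))
        (((N : ℝ≥0∞) - 1)⁻¹ • ∑ j ∈ Finset.univ.erase i, Measure.dirac (x j)),
      ∫ p, dist p.1 p.2 ∂γ ≤ Metric.diam (Set.univ : Set X) / N := by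
  classical
  set a : ℝ≥0∞ := (N : ℝ≥0∞) with ha_def
  have hN0 : (N : ℕ) ≠ 0 := by omega
  have ha0 : a ≠ 0 := by simpa [ha_def] using hN0
  have haT : a ≠ ⊤ := ENNReal.natCast_ne_top N
  set b : ℝ≥0∞ := a - 1 with hb_def
  have hb : b = ((N - 1 : ℕ) : ℝ≥0∞) := by
    rw [ENNReal.natCast_sub]; simp [hb_def, ha_def]
  have hb0 : b ≠ 0 := by
    rw [hb]; exact_mod_cast (by omega : (N - 1 : ℕ) ≠ 0)
  have hbT : b ≠ ⊤ := by rw [hb]; exact ENNReal.natCast_ne_top _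
  have hba : b + 1 = a := by
    rw [hb_def]; refine tsub_add_cancel_of_le ?_
    rw [ha_def]; exact_mod_cast (by omega : 1 ≤ N)
  have hinv : (a * b)⁻¹ = a⁻¹ * b⁻¹ := ENNReal.mul_inv (Or.inl ha0) (Or.inl haT)
  have key1 : b * (a * b)⁻¹ = a⁻¹ := by
    rw [hinv, mul_left_comm, mul_comm b b⁻¹, ENNReal.inv_mul_cancel hb0 hbT, mul_one]
  have key2 : a⁻¹ + (a * b)⁻¹ = b⁻¹ := by
    rw [hinv]
    calc a⁻¹ + a⁻¹ * b⁻¹ = a⁻¹ * (b * b⁻¹ + b⁻¹) := by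
          rw [ENNReal.mul_inv_cancel hb0 hbT, mul_add, mul_one]
      _ = a⁻¹ * ((b + 1) * b⁻¹) := by ring_nf
      _ = a⁻¹ * a * b⁻¹ := by rw [hba, ← mul_assoc]
      _ = b⁻¹ := by rw [ENNReal.inv_mul_cancel ha0 haT, one_mul]
  set γ : Measure (X × X) :=
    (∑ j ∈ Finset.univ.erase i, a⁻¹ • Measure.dirac ((x j, x j) : X × X)) +
      ∑ j ∈ Finset.univ.erase i, (a * b)⁻¹ • Measure.dirac ((x i, x j) : X × X) with hγ_def
  have hcard : (Finset.univ.erase i).card = N - 1 := by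
    rw [Finset.card_erase_of_mem (Finset.mem_univ i)]; simp
  -- first marginal
  have hfst : γ.map Prod.fst = (N : ℝ≥0∞)⁻¹ • ∑ j : Fin N, Measure.dirac (x j) := by
    rw [hγ_def, Measure.map_add _ _ measurable_fst,
      my_map_sum_smul_dirac _ _ _ measurable_fst, my_map_sum_smul_dirac _ _ _ measurable_fst]
    simp only [Finset.sum_const, hcard]
    rw [← Nat.cast_smul_eq_nsmul ℝ≥0∞, ← hb, smul_smul, key1, Finset.smul_sum.symm,
      ← smul_add, Finset.sum_erase_add _ _ (Finset.mem_univ i)]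
  -- second marginal
  have hsnd : γ.map Prod.snd
      = ((N : ℝ≥0∞) - 1)⁻¹ • ∑ j ∈ Finset.univ.erase i, Measure.dirac (x j) := by
    rw [hγ_def, Measure.map_add _ _ measurable_snd,
      my_map_sum_smul_dirac _ _ _ measurable_snd, my_map_sum_smul_dirac _ _ _ measurable_snd,
      ← Finset.sum_add_distrib]
    simp only [← add_smul, key2]
    rw [← Finset.smul_sum, ← hb_def]
  have hν_prob : IsProbabilityMeasure ((N : ℝ≥0∞)⁻¹ • ∑ j : Fin N, Measure.dirac (x j)) := by
    constructor
    simp only [Measure.smul_apply, Measure.finset_sum_apply, measure_univ,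
      Finset.sum_const, Finset.card_univ, Fintype.card_fin, smul_eq_mul, nsmul_eq_mul, mul_one]
    exact ENNReal.inv_mul_cancel ha0 haT
  have hγ_prob : IsProbabilityMeasure γ := by
    constructor
    have : γ.map Prod.fst Set.univ = γ Set.univ := by
      rw [Measure.map_apply measurable_fst MeasurableSet.univ, Set.preimage_univ]
    rw [← this, hfst, hν_prob.measure_univ]
  refine ⟨γ, ⟨hγ_prob, hfst, hsnd⟩, ?_⟩
  -- cost bound
  have haiT : a⁻¹ ≠ ⊤ := ENNReal.inv_ne_top.2 ha0
  have habT : (a * b)⁻¹ ≠ ⊤ := ENNReal.inv_ne_top.2 (mul_ne_zero ha0 hb0)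
  have hint : ∫ p, dist p.1 p.2 ∂γ
      = ∑ j ∈ Finset.univ.erase i, (a⁻¹).toReal * dist (x j) (x j) +
        ∑ j ∈ Finset.univ.erase i, ((a * b)⁻¹).toReal * dist (x i) (x j) := by
    rw [hγ_def, integral_add_measure, my_integral_sum_smul_dirac _ _ (fun _ _ => haiT),
      my_integral_sum_smul_dirac _ _ (fun _ _ => habT)]
    · exact integrable_finset_sum_measure.2
        (fun j _ => (my_integrable_dirac _ _).smul_measure haiT)
    · exact integrable_finset_sum_measure.2
        (fun j _ => (my_integrable_dirac _ _).smul_measure habT)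
  rw [hint]
  simp only [dist_self, mul_zero, Finset.sum_const, smul_zero, zero_add, smul_eq_mul]
  have hdiam : ∀ j, dist (x i) (x j) ≤ Metric.diam (Set.univ : Set X) := fun j =>
    Metric.dist_le_diam_of_mem isCompact_univ.isBounded (Set.mem_univ _) (Set.mem_univ _)
  have har : a.toReal = (N : ℝ) := by rw [ha_def]; simp
  have hbr : b.toReal = (N : ℝ) - 1 := by
    rw [hb, ENNReal.toReal_natCast]
    push_cast [Nat.cast_sub (by omega : 1 ≤ N)]
    ring
  have htr : ((a * b)⁻¹).toReal = ((N : ℝ) * ((N : ℝ) - 1))⁻¹ := by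
    rw [ENNReal.toReal_inv, ENNReal.toReal_mul, har, hbr]
  calc ∑ j ∈ Finset.univ.erase i, ((a * b)⁻¹).toReal * dist (x i) (x j)
      ≤ ∑ j ∈ Finset.univ.erase i, ((a * b)⁻¹).toReal * Metric.diam (Set.univ : Set X) := by
        refine Finset.sum_le_sum fun j _ => ?_
        exact mul_le_mul_of_nonneg_left (hdiam j) ENNReal.toReal_nonneg
    _ = (N - 1 : ℝ) * (((N : ℝ) * ((N : ℝ) - 1))⁻¹ * Metric.diam (Set.univ : Set X)) := by
        rw [Finset.sum_const, hcard, nsmul_eq_mul, htr]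
        push_cast [Nat.cast_sub (by omega : 1 ≤ N)]
        ring
    _ = Metric.diam (Set.univ : Set X) / N := by
        have hNR : (2 : ℝ) ≤ (N : ℝ) := by exact_mod_cast hN
        have h1 : (N : ℝ) ≠ 0 := by linarith
        have h2 : (N : ℝ) - 1 ≠ 0 := by linarith
        field_simp

lemma my_prob_smul_sum_dirac {α ι : Type*} [MeasurableSpace α]
    (s : Finset ι) (hs : s.Nonempty) (a : ι → α) :
    IsProbabilityMeasure ((s.card : ℝ≥0∞)⁻¹ • ∑ i ∈ s, Measure.dirac (a i)) := by
  constructor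
  simp only [Measure.smul_apply, Measure.finset_sum_apply, measure_univ,
    Finset.sum_const, nsmul_eq_mul, mul_one, smul_eq_mul]
  exact ENNReal.inv_mul_cancel
    (by exact_mod_cast Finset.card_ne_zero_of_mem hs.choose_spec)
    (ENNReal.natCast_ne_top _)


/-- **The key inequality in the passage from Nash to Cournot-Nash.**
If `x̄^N` is a Nash equilibrium of the game with costs
`Jᵢ^N(x) = F(θᵢ, xᵢ, (1/(N-1)) Σ_{j≠i} δ_{xⱼ})`, where `F` admits `ω` as modulus
of continuity in its measure argument (w.r.t. `W₁`), uniformly in the first two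
arguments, then with the empirical measures `μ^N, ν^N, γ^N` one has
`∫ F(θ, x, ν^N) dγ^N ≤ ∫ min_y F(θ, y, ν^N) dμ^N + ε_N`, `ε_N = 2 ω(diam X / N)`. -/
theorem nash_integral_le_min_integral_add_eps
    {Θ X : Type*}
    [MetricSpace Θ] [CompactSpace Θ] [MeasurableSpace Θ] [BorelSpace Θ]
    [MetricSpace X] [CompactSpace X] [MeasurableSpace X] [BorelSpace X]
    (N : ℕ) (hN : 2 ≤ N) (θ : Fin N → Θ)
    (F : Θ → X → Measure X → ℝ)
    (ω : ℝ → ℝ) (hω_mono : Monotone ω) (hω_zero : ω 0 = 0)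
    (hF_mod : ∀ (t : Θ) (x : X) (ν ν' : Measure X),
      IsProbabilityMeasure ν → IsProbabilityMeasure ν' →
      |F t x ν - F t x ν'| ≤ ω (W1 ν ν'))
    (xbar : Fin N → X)
    (hNash : ∀ i : Fin N, ∀ y : X,
      F (θ i) (xbar i)
          (((N : ℝ≥0∞) - 1)⁻¹ • ∑ j ∈ Finset.univ.erase i, Measure.dirac (xbar j)) ≤
        F (θ i) y
          (((N : ℝ≥0∞) - 1)⁻¹ • ∑ j ∈ Finset.univ.erase i, Measure.dirac (xbar j))) :
    ∫ p, F p.1 p.2 ((N : ℝ≥0∞)⁻¹ • ∑ i : Fin N, Measure.dirac (xbar i))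
        ∂((N : ℝ≥0∞)⁻¹ • ∑ i : Fin N, Measure.dirac (θ i, xbar i)) ≤
      (∫ t, (⨅ y : X, F t y ((N : ℝ≥0∞)⁻¹ • ∑ i : Fin N, Measure.dirac (xbar i)))
          ∂((N : ℝ≥0∞)⁻¹ • ∑ i : Fin N, Measure.dirac (θ i))) +
        2 * ω (Metric.diam (Set.univ : Set X) / N) := by
  classical
  have hX : Nonempty X := ⟨xbar ⟨0, by omega⟩⟩
  set ν : Measure X := (N : ℝ≥0∞)⁻¹ • ∑ i : Fin N, Measure.dirac (xbar i) with hν_def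
  set c : ℝ := ω (Metric.diam (Set.univ : Set X) / N) with hc_def
  have hν_prob : IsProbabilityMeasure ν := by
    have := my_prob_smul_sum_dirac (Finset.univ : Finset (Fin N))
      ⟨⟨0, by omega⟩, Finset.mem_univ _⟩ xbar
    simpa [hν_def] using this
  -- the per-player inequality
  have key : ∀ i : Fin N, F (θ i) (xbar i) ν ≤ (⨅ y : X, F (θ i) y ν) + 2 * c := by
    intro i
    set νh : Measure X :=
      ((N : ℝ≥0∞) - 1)⁻¹ • ∑ j ∈ Finset.univ.erase i, Measure.dirac (xbar j) with hνh_def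
    have hνh_prob : IsProbabilityMeasure νh := by
      have hne : (Finset.univ.erase i).Nonempty := by
        rw [← Finset.card_pos, Finset.card_erase_of_mem (Finset.mem_univ i)]
        simp; omega
      have := my_prob_smul_sum_dirac (Finset.univ.erase i) hne xbar
      have hc' : ((Finset.univ.erase i).card : ℝ≥0∞) = (N : ℝ≥0∞) - 1 := by
        rw [Finset.card_erase_of_mem (Finset.mem_univ i), Finset.card_univ, Fintype.card_fin,
          ENNReal.natCast_sub]
        simp
      rwa [hc'] at this
    obtain ⟨γ, hγmem, hγcost⟩ := my_coupling N hN xbar i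
    have h1 : W1 ν νh ≤ Metric.diam (Set.univ : Set X) / N :=
      (my_W1_le_integral hγmem).trans hγcost
    have h2 : W1 νh ν ≤ Metric.diam (Set.univ : Set X) / N :=
      (my_W1_swap_le hγmem).trans hγcost
    have e1 : F (θ i) (xbar i) ν - F (θ i) (xbar i) νh ≤ c := by
      have := (le_abs_self _).trans (hF_mod (θ i) (xbar i) ν νh hν_prob hνh_prob)
      exact this.trans (hω_mono h1)
    have e2 : ∀ y, F (θ i) y νh - F (θ i) y ν ≤ c := fun y => by
      have := (le_abs_self _).trans (hF_mod (θ i) y νh ν hνh_prob hν_prob)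
      exact this.trans (hω_mono h2)
    have h3 : ∀ y, F (θ i) (xbar i) ν - 2 * c ≤ F (θ i) y ν := fun y => by
      have := hNash i y
      have e2y := e2 y
      rw [← hνh_def] at this
      linarith
    have := le_ciInf h3
    linarith [this]
  -- compute the integrals
  have hr : ((N : ℝ≥0∞)⁻¹).toReal = (N : ℝ)⁻¹ := by
    rw [ENNReal.toReal_inv]; simp
  have hL : ∫ p, F p.1 p.2 ν ∂((N : ℝ≥0∞)⁻¹ • ∑ i : Fin N, Measure.dirac (θ i, xbar i))
      = (N : ℝ)⁻¹ * ∑ i : Fin N, F (θ i) (xbar i) ν := by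
    rw [integral_smul_measure, my_integral_sum_dirac Finset.univ (fun i => (θ i, xbar i))
      (fun p => F p.1 p.2 ν), hr, smul_eq_mul]
  have hR : ∫ t, (⨅ y : X, F t y ν) ∂((N : ℝ≥0∞)⁻¹ • ∑ i : Fin N, Measure.dirac (θ i))
      = (N : ℝ)⁻¹ * ∑ i : Fin N, ⨅ y : X, F (θ i) y ν := by
    rw [integral_smul_measure, my_integral_sum_dirac Finset.univ θ
      (fun t => ⨅ y : X, F t y ν), hr, smul_eq_mul]
  rw [hL, hR]
  have hsum : ∑ i : Fin N, F (θ i) (xbar i) ν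
      ≤ ∑ i : Fin N, ((⨅ y : X, F (θ i) y ν) + 2 * c) :=
    Finset.sum_le_sum fun i _ => key i
  have hNR : (0 : ℝ) < (N : ℝ) := by exact_mod_cast Nat.pos_of_ne_zero (by omega)
  calc (N : ℝ)⁻¹ * ∑ i : Fin N, F (θ i) (xbar i) ν
      ≤ (N : ℝ)⁻¹ * ∑ i : Fin N, ((⨅ y : X, F (θ i) y ν) + 2 * c) :=
        mul_le_mul_of_nonneg_left hsum (by positivity)
    _ = ((N : ℝ)⁻¹ * ∑ i : Fin N, ⨅ y : X, F (θ i) y ν) + ((N : ℝ)⁻¹ * N) * (2 * c) := by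
        rw [Finset.sum_add_distrib, Finset.sum_const, Finset.card_univ, Fintype.card_fin,
          nsmul_eq_mul]
        ring
    _ = ((N : ℝ)⁻¹ * ∑ i : Fin N, ⨅ y : X, F (θ i) y ν) + 2 * c := by
        rw [inv_mul_cancel₀ (ne_of_gt hNR), one_mul]
end

section
/- Let Θ and X be compact metric spaces, N ≥ 2, K > 0, and let J^N : Θ × X × X^{N−1} → ℝ be symmetric in the last N−1 variables and satisfy, for all θ_i, θ_j ∈ Θ and all (x_i, x_{-i}), (y_i, y_{-i}) ∈ X^N: |J^N(θ_i, x_i, x_{-i}) − J^N(θ_j, y_i, y_{-i})| ≤ K d_Θ(θ_i,θ_j) + K d_X(x_i,y_i) + K W_1((1/(N−1)) Σ_{j≠i} δ_{x_j}, (1/(N−1)) Σ_{j≠i} δ_{y_j}). Define the mixed extension J̄^N(θ, π_i, π_{-i}) := ∫_{X^N} J^N(θ, x, x_{-i}) π_i(dx) ⊗_{j≠i} π_j(dx_j). Then for every θ_i, θ_j ∈ Θ and every (π_i, π_{-i}), (η_i, η_{-i}) ∈ P(X)^N: |J̄^N(θ_i, π_i, π_{-i}) − J̄^N(θ_j, η_i,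 η_{-i})| ≤ K d_Θ(θ_i, θ_j) + K W_1(π_i, η_i) + K min_{σ ∈ S_{N−1}} (1/(N−1)) Σ_{j≠i} W_1(π_j, η_{σ(j)}), where S_{N−1} is the set of permutations of the indices j ≠ i. -/
open MeasureTheory
open scoped ENNReal NNReal

set_option linter.unusedSectionVars false

section Aux
variable {X : Type*} [MetricSpace X] [CompactSpace X] [MeasurableSpace X] [BorelSpace X]

lemma cont_integrable {Y : Type*} [MeasurableSpace Y] [MetricSpace Y] [CompactSpace Y]
    [OpensMeasurableSpace Y] {f : Y → ℝ} (hf : Continuous f) (μ : Measure Y)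
    [IsFiniteMeasure μ] : Integrable f μ := by
  have := hf.continuousOn.integrableOn_compact (μ := μ) (isCompact_univ (X := Y))
  rwa [integrableOn_univ] at this

lemma prod_mem_couplings (μ ν : Measure X) [IsProbabilityMeasure μ] [IsProbabilityMeasure ν] :
    μ.prod ν ∈ Couplings μ ν := by
  refine ⟨inferInstance, ?_, ?_⟩ <;> simp

lemma couplings_bddBelow (μ ν : Measure X) :
    BddBelow ((fun γ => ∫ p : X × X, dist p.1 p.2 ∂γ) '' Couplings μ ν) := by
  refine ⟨0, ?_⟩
  rintro r ⟨γ, hγ, rfl⟩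
  exact integral_nonneg fun p => dist_nonneg

lemma W1_le_of_coupling {μ ν : Measure X} {γ : Measure (X × X)} (hγ : γ ∈ Couplings μ ν) :
    W1 μ ν ≤ ∫ p : X × X, dist p.1 p.2 ∂γ :=
  csInf_le (couplings_bddBelow μ ν) ⟨γ, hγ, rfl⟩

lemma exists_coupling_le (μ ν : Measure X) [IsProbabilityMeasure μ] [IsProbabilityMeasure ν]
    {ε : ℝ} (hε : 0 < ε) :
    ∃ γ ∈ Couplings μ ν, ∫ p : X × X, dist p.1 p.2 ∂γ ≤ W1 μ ν + ε := by
  obtain ⟨r, ⟨γ, hγ, rfl⟩, hr⟩ := Real.lt_sInf_add_pos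
    (Set.image_nonempty.mpr ⟨μ.prod ν, prod_mem_couplings μ ν⟩) hε
  exact ⟨γ, hγ, hr.le⟩

end Aux


section Aux2
variable {X : Type*} [MetricSpace X] [CompactSpace X] [MeasurableSpace X] [BorelSpace X]

-- map of a finset sum of measures
lemma map_finset_sum' {ι : Type*} (s : Finset ι) (μ : ι → Measure (X × X)) {f : X × X → X}
    (hf : Measurable f) : Measure.map f (∑ i ∈ s, μ i) = ∑ i ∈ s, (μ i).map f := by
  classical
  induction s using Finset.induction with
  | empty => simp
  | insert _ _ h ih => rw [Finset.sum_insert h, Measure.map_add _ _ hf, ih, Finset.sum_insert h]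

lemma emp_coupling_mem (n : ℕ) (hn : 1 ≤ n) (z w : Fin n → X) :
    ((n : ℝ≥0∞)⁻¹ • ∑ j : Fin n, Measure.dirac (z j, w j)) ∈
      Couplings ((n : ℝ≥0∞)⁻¹ • ∑ j : Fin n, Measure.dirac (z j))
        ((n : ℝ≥0∞)⁻¹ • ∑ j : Fin n, Measure.dirac (w j)) := by
  have hn0 : (n : ℝ≥0∞) ≠ 0 := by exact_mod_cast Nat.pos_of_ne_zero (by omega) |>.ne'
  refine ⟨⟨?_⟩, ?_, ?_⟩
  · simp only [Measure.smul_apply, Measure.coe_finset_sum, Finset.sum_apply,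
      Measure.dirac_apply_of_mem (Set.mem_univ _), Finset.sum_const, Finset.card_univ,
      Fintype.card_fin, nsmul_eq_mul, smul_eq_mul]
    rw [mul_one, ENNReal.inv_mul_cancel hn0 (by simp)]
  · rw [Measure.map_smul, map_finset_sum' _ _ measurable_fst]
    simp [Measure.map_dirac' measurable_fst]
  · rw [Measure.map_smul, map_finset_sum' _ _ measurable_snd]
    simp [Measure.map_dirac' measurable_snd]

lemma W1_emp_le (n : ℕ) (hn : 1 ≤ n) (z w : Fin n → X) :
    W1 ((n : ℝ≥0∞)⁻¹ • ∑ j : Fin n, Measure.dirac (z j))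
       ((n : ℝ≥0∞)⁻¹ • ∑ j : Fin n, Measure.dirac (w j)) ≤
      (n : ℝ)⁻¹ * ∑ j : Fin n, dist (z j) (w j) := by
  refine le_trans (W1_le_of_coupling (emp_coupling_mem n hn z w)) ?_
  rw [integral_smul_measure, integral_finset_sum_measure (fun j _ =>
    (cont_integrable (by fun_prop) _))]
  simp only [integral_dirac]
  rw [ENNReal.toReal_inv, smul_eq_mul]
  simp

end Aux2

section Aux3
variable {X : Type*} [MetricSpace X] [CompactSpace X] [MeasurableSpace X] [BorelSpace X]

lemma pi_map_eval {n : ℕ} (μ : Fin n → Measure X) [∀ j, IsProbabilityMeasure (μ j)]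
    (i : Fin n) : (Measure.pi μ).map (fun v => v i) = μ i := by
  ext s hs
  rw [Measure.map_apply (measurable_pi_apply i) hs]
  have h : (fun v : Fin n → X => v i) ⁻¹' s
      = Set.pi Set.univ (Function.update (fun _ : Fin n => (Set.univ : Set X)) i s) := by
    ext v
    simp only [Set.mem_preimage, Set.mem_pi, Set.mem_univ, forall_true_left]
    constructor
    · intro hv j
      rcases eq_or_ne j i with rfl | hj
      · simpa using hv
      · simp [Function.update_of_ne hj]
    · intro hv
      simpa using hv i
  rw [h, Measure.pi_pi]
  rw [Finset.prod_eq_single i (fun j _ hj => by simp [Function.update_of_ne hj])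
    (by simp)]
  simp

lemma pi_map_coord {n : ℕ} (γ : Fin n → Measure (X × X)) [∀ j, IsProbabilityMeasure (γ j)]
    {f : X × X → X} (hf : Measurable f) :
    (Measure.pi γ).map (fun v j => f (v j)) = Measure.pi (fun j => (γ j).map f) := by
  haveI : ∀ j, IsProbabilityMeasure ((γ j).map f) :=
    fun j => Measure.isProbabilityMeasure_map hf.aemeasurable
  refine (Measure.pi_eq fun s hs => ?_).symm
  have hg : Measurable fun (v : Fin n → X × X) j => f (v j) :=
    measurable_pi_lambda _ fun j => hf.comp (measurable_pi_apply j)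
  rw [Measure.map_apply hg (MeasurableSet.univ_pi hs)]
  have h : (fun (v : Fin n → X × X) j => f (v j)) ⁻¹' Set.pi Set.univ s
      = Set.pi Set.univ (fun j => f ⁻¹' s j) := by
    ext v; simp
  rw [h, Measure.pi_pi]
  exact Finset.prod_congr rfl fun j _ => (Measure.map_apply hf (hs j)).symm

lemma pi_map_perm {n : ℕ} (q : Fin n → Measure X) [∀ j, IsProbabilityMeasure (q j)]
    (σ : Equiv.Perm (Fin n)) :
    (Measure.pi fun j => q (σ j)).map (fun w => w ∘ σ.symm) = Measure.pi q := by
  refine (Measure.pi_eq fun s hs => ?_).symm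
  have hg : Measurable fun (w : Fin n → X) => w ∘ σ.symm :=
    measurable_pi_lambda _ fun j => measurable_pi_apply _
  rw [Measure.map_apply hg (MeasurableSet.univ_pi hs)]
  have h : (fun (w : Fin n → X) => w ∘ ⇑σ.symm) ⁻¹' Set.pi Set.univ s
      = Set.pi Set.univ (fun i => s (σ i)) := by
    ext w
    simp only [Set.mem_preimage, Set.mem_pi, Set.mem_univ, forall_true_left, Function.comp]
    exact ⟨fun hw i => by simpa using hw (σ i), fun hw j => by simpa using hw (σ.symm j)⟩
  rw [h, Measure.pi_pi]
  exact Equiv.prod_comp σ fun j => q j (s j)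

end Aux3

section Aux4
variable {Θ X : Type*} [MetricSpace Θ] [MetricSpace X] [CompactSpace X]
  [MeasurableSpace X] [BorelSpace X]

lemma J_pointwise_bound {n : ℕ} (hn : 1 ≤ n) {K : ℝ} (hK : 0 < K)
    {J : Θ → X → (Fin n → X) → ℝ}
    (hlip : ∀ (t t' : Θ) (x y : X) (z w : Fin n → X),
      |J t x z - J t' y w| ≤ K * dist t t' + K * dist x y +
        K * W1 ((n : ℝ≥0∞)⁻¹ • ∑ j : Fin n, Measure.dirac (z j))
               ((n : ℝ≥0∞)⁻¹ • ∑ j : Fin n, Measure.dirac (w j)))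
    (t t' : Θ) (x y : X) (z w : Fin n → X) :
    |J t x z - J t' y w| ≤ K * dist t t' + K * dist x y +
      K * ((n : ℝ)⁻¹ * ∑ j : Fin n, dist (z j) (w j)) := by
  refine (hlip t t' x y z w).trans ?_
  gcongr
  exact W1_emp_le n hn z w

lemma J_continuous {n : ℕ} (hn : 1 ≤ n) {K : ℝ} (hK : 0 < K)
    {J : Θ → X → (Fin n → X) → ℝ}
    (hlip : ∀ (t t' : Θ) (x y : X) (z w : Fin n → X),
      |J t x z - J t' y w| ≤ K * dist t t' + K * dist x y +
        K * W1 ((n : ℝ≥0∞)⁻¹ • ∑ j : Fin n, Measure.dirac (z j))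
               ((n : ℝ≥0∞)⁻¹ • ∑ j : Fin n, Measure.dirac (w j)))
    (t : Θ) : Continuous (fun u : X × (Fin n → X) => J t u.1 u.2) := by
  have hn0 : (0 : ℝ) < n := by exact_mod_cast Nat.pos_of_ne_zero (by omega)
  refine (LipschitzWith.of_dist_le_mul (K := (2 * K).toNNReal) fun u v => ?_).continuous
  rw [Real.dist_eq, Real.coe_toNNReal _ (by positivity)]
  have h1 : ∑ j : Fin n, dist (u.2 j) (v.2 j) ≤ n * dist u v := by
    calc ∑ j : Fin n, dist (u.2 j) (v.2 j) ≤ ∑ _j : Fin n, dist u v := by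
          refine Finset.sum_le_sum fun j _ => ?_
          exact (dist_le_pi_dist u.2 v.2 j).trans (by rw [Prod.dist_eq]; exact le_max_right _ _)
      _ = n * dist u v := by simp [mul_comm]
  calc |J t u.1 u.2 - J t v.1 v.2|
      ≤ K * dist t t + K * dist u.1 v.1 +
        K * ((n : ℝ)⁻¹ * ∑ j : Fin n, dist (u.2 j) (v.2 j)) :=
        J_pointwise_bound hn hK hlip t t u.1 v.1 u.2 v.2
    _ ≤ K * 0 + K * dist u v +
        K * ((n : ℝ)⁻¹ * (n * dist u v)) := by
        gcongr
        · simp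
        · rw [Prod.dist_eq]; exact le_max_left _ _
    _ = 2 * K * dist u v := by field_simp; ring
end Aux4

section Key
variable {Θ X : Type*} [MetricSpace Θ] [CompactSpace Θ]
  [MetricSpace X] [CompactSpace X] [MeasurableSpace X] [BorelSpace X]

lemma key_estimate (n : ℕ) (hn : 1 ≤ n) (K : ℝ) (hK : 0 < K)
    (J : Θ → X → (Fin n → X) → ℝ)
    (hlip : ∀ (t t' : Θ) (x y : X) (z w : Fin n → X),
      |J t x z - J t' y w| ≤ K * dist t t' + K * dist x y +
        K * W1 ((n : ℝ≥0∞)⁻¹ • ∑ j : Fin n, Measure.dirac (z j))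
               ((n : ℝ≥0∞)⁻¹ • ∑ j : Fin n, Measure.dirac (w j)))
    (t t' : Θ)
    (π η : Measure X) [IsProbabilityMeasure π] [IsProbabilityMeasure η]
    (p q : Fin n → Measure X)
    (hp : ∀ j, IsProbabilityMeasure (p j)) (hq : ∀ j, IsProbabilityMeasure (q j)) :
    |(∫ u : X × (Fin n → X), J t u.1 u.2 ∂(π.prod (Measure.pi p))) -
        ∫ u : X × (Fin n → X), J t' u.1 u.2 ∂(η.prod (Measure.pi q))| ≤
      K * dist t t' + K * W1 π η + K * ((n : ℝ)⁻¹ * ∑ j : Fin n, W1 (p j) (q j)) := by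
  haveI := hp; haveI := hq
  have hn0 : (0 : ℝ) < n := by exact_mod_cast Nat.pos_of_ne_zero (by omega)
  refine le_of_forall_pos_le_add fun ε hε => ?_
  set ε' : ℝ := ε / (2 * K) with hε'def
  have hε' : 0 < ε' := by positivity
  obtain ⟨γ₀, hγ₀, hγ₀int⟩ := exists_coupling_le π η hε'
  choose γ hγ hγint using fun j => exists_coupling_le (p j) (q j) hε'
  haveI : IsProbabilityMeasure γ₀ := hγ₀.1
  haveI : ∀ j, IsProbabilityMeasure (γ j) := fun j => (hγ j).1
  set Γ : Measure ((X × X) × (Fin n → X × X)) := γ₀.prod (Measure.pi γ) with hΓdef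
  haveI : IsProbabilityMeasure Γ := by rw [hΓdef]; infer_instance
  have hJt := J_continuous (Θ := Θ) (X := X) hn hK hlip t
  have hJt' := J_continuous (Θ := Θ) (X := X) hn hK hlip t'
  -- the two relevant "projection" maps
  have hg1 : Measurable fun (v : Fin n → X × X) j => (v j).1 :=
    measurable_pi_lambda _ fun j => measurable_fst.comp (measurable_pi_apply j)
  have hg2 : Measurable fun (v : Fin n → X × X) j => (v j).2 :=
    measurable_pi_lambda _ fun j => measurable_snd.comp (measurable_pi_apply j)
  have hmap1 : Γ.map (Prod.map Prod.fst fun v j => (v j).1) = π.prod (Measure.pi p) := by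
    rw [hΓdef, ← Measure.map_prod_map _ _ measurable_fst hg1, hγ₀.2.1,
      pi_map_coord γ measurable_fst]
    congr 1
    exact congrArg Measure.pi (funext fun j => (hγ j).2.1)
  have hmap2 : Γ.map (Prod.map Prod.snd fun v j => (v j).2) = η.prod (Measure.pi q) := by
    rw [hΓdef, ← Measure.map_prod_map _ _ measurable_snd hg2, hγ₀.2.2,
      pi_map_coord γ measurable_snd]
    congr 1
    exact congrArg Measure.pi (funext fun j => (hγ j).2.2)
  have hφ1 : Measurable (Prod.map (Prod.fst : X × X → X) fun (v : Fin n → X × X) j => (v j).1) :=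
    measurable_fst.prodMap hg1
  have hφ2 : Measurable (Prod.map (Prod.snd : X × X → X) fun (v : Fin n → X × X) j => (v j).2) :=
    measurable_snd.prodMap hg2
  have hA : (∫ u : X × (Fin n → X), J t u.1 u.2 ∂(π.prod (Measure.pi p)))
      = ∫ v, J t v.1.1 (fun j => (v.2 j).1) ∂Γ := by
    rw [← hmap1, integral_map hφ1.aemeasurable hJt.aestronglyMeasurable]
    rfl
  have hB : (∫ u : X × (Fin n → X), J t' u.1 u.2 ∂(η.prod (Measure.pi q)))
      = ∫ v, J t' v.1.2 (fun j => (v.2 j).2) ∂Γ := by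
    rw [← hmap2, integral_map hφ2.aemeasurable hJt'.aestronglyMeasurable]
    rfl
  -- integrability
  have hcF : Continuous fun (v : (X × X) × (Fin n → X × X)) => J t v.1.1 fun j => (v.2 j).1 := by
    have : Continuous fun (v : (X × X) × (Fin n → X × X)) =>
        ((v.1.1, fun j => (v.2 j).1) : X × (Fin n → X)) := by fun_prop
    exact hJt.comp this
  have hcG : Continuous fun (v : (X × X) × (Fin n → X × X)) => J t' v.1.2 fun j => (v.2 j).2 := by
    have : Continuous fun (v : (X × X) × (Fin n → X × X)) =>
        ((v.1.2, fun j => (v.2 j).2) : X × (Fin n → X)) := by fun_prop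
    exact hJt'.comp this
  have hF : Integrable (fun v => J t v.1.1 fun j => (v.2 j).1) Γ := cont_integrable hcF Γ
  have hG : Integrable (fun v => J t' v.1.2 fun j => (v.2 j).2) Γ := cont_integrable hcG Γ
  -- integrals of coordinate distances
  have e1 : (∫ v : (X × X) × (Fin n → X × X), dist v.1.1 v.1.2 ∂Γ)
      = ∫ u : X × X, dist u.1 u.2 ∂γ₀ := by
    have hm : Γ.map Prod.fst = γ₀ := by
      rw [hΓdef, Measure.map_fst_prod]; simp
    rw [← hm, integral_map measurable_fst.aemeasurable
      (by fun_prop : Continuous fun u : X × X => dist u.1 u.2).aestronglyMeasurable]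
  have e2 : ∀ j : Fin n, (∫ v : (X × X) × (Fin n → X × X), dist (v.2 j).1 (v.2 j).2 ∂Γ)
      = ∫ u : X × X, dist u.1 u.2 ∂(γ j) := by
    intro j
    have hm : Γ.map (fun v => v.2 j) = γ j := by
      have hcomp : (fun v : (X × X) × (Fin n → X × X) => v.2 j)
          = (fun w : Fin n → X × X => w j) ∘ Prod.snd := rfl
      rw [hcomp, ← Measure.map_map (measurable_pi_apply j) measurable_snd, hΓdef,
        Measure.map_snd_prod]
      simp [pi_map_eval γ j]
    rw [← hm, integral_map (measurable_snd.eval).aemeasurable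
      (by fun_prop : Continuous fun u : X × X => dist u.1 u.2).aestronglyMeasurable]
  -- the pointwise bound and its integral
  have hbound : ∀ v : (X × X) × (Fin n → X × X),
      |J t v.1.1 (fun j => (v.2 j).1) - J t' v.1.2 (fun j => (v.2 j).2)| ≤
        K * dist t t' + K * dist v.1.1 v.1.2 +
          K * ((n : ℝ)⁻¹ * ∑ j : Fin n, dist (v.2 j).1 (v.2 j).2) := fun v =>
    J_pointwise_bound hn hK hlip t t' v.1.1 v.1.2 _ _
  have hint1 : Integrable (fun v : (X × X) × (Fin n → X × X) => dist v.1.1 v.1.2) Γ :=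
    cont_integrable (by fun_prop) Γ
  have hint2 : ∀ j : Fin n,
      Integrable (fun v : (X × X) × (Fin n → X × X) => dist (v.2 j).1 (v.2 j).2) Γ :=
    fun j => cont_integrable (by fun_prop) Γ
  have hintB : Integrable (fun v : (X × X) × (Fin n → X × X) =>
      K * dist t t' + K * dist v.1.1 v.1.2 +
        K * ((n : ℝ)⁻¹ * ∑ j : Fin n, dist (v.2 j).1 (v.2 j).2)) Γ :=
    cont_integrable (by fun_prop) Γ
  have hstep : |(∫ u : X × (Fin n → X), J t u.1 u.2 ∂(π.prod (Measure.pi p))) -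
        ∫ u : X × (Fin n → X), J t' u.1 u.2 ∂(η.prod (Measure.pi q))| ≤
      K * dist t t' + K * (∫ u : X × X, dist u.1 u.2 ∂γ₀) +
        K * ((n : ℝ)⁻¹ * ∑ j : Fin n, ∫ u : X × X, dist u.1 u.2 ∂(γ j)) := by
    rw [hA, hB, ← integral_sub hF hG]
    calc |∫ v, (J t v.1.1 (fun j => (v.2 j).1) - J t' v.1.2 fun j => (v.2 j).2) ∂Γ|
        ≤ ∫ v, |J t v.1.1 (fun j => (v.2 j).1) - J t' v.1.2 fun j => (v.2 j).2| ∂Γ := by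
          simpa [Real.norm_eq_abs] using
            norm_integral_le_integral_norm (μ := Γ)
              fun v => J t v.1.1 (fun j => (v.2 j).1) - J t' v.1.2 fun j => (v.2 j).2
      _ ≤ ∫ v : (X × X) × (Fin n → X × X), (K * dist t t' + K * dist v.1.1 v.1.2 +
            K * ((n : ℝ)⁻¹ * ∑ j : Fin n, dist (v.2 j).1 (v.2 j).2)) ∂Γ :=
          integral_mono (hF.sub hG).abs hintB hbound
      _ = K * dist t t' + K * (∫ u : X × X, dist u.1 u.2 ∂γ₀) +
            K * ((n : ℝ)⁻¹ * ∑ j : Fin n, ∫ u : X × X, dist u.1 u.2 ∂(γ j)) := by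
          rw [integral_add (by exact (integrable_const _).add (hint1.const_mul K))
              (by exact ((integrable_finset_sum _ fun j _ => hint2 j).const_mul _).const_mul K),
            integral_add (integrable_const _) (hint1.const_mul K), integral_const]
          simp only [measure_univ, probReal_univ, ENNReal.toReal_one, one_smul, integral_const_mul]
          rw [integral_finset_sum _ fun j _ => hint2 j, e1]
          congr 3
          exact Finset.sum_congr rfl fun j _ => e2 j
  refine hstep.trans ?_
  have hK0 : K ≠ 0 := hK.ne'
  have hn0' : (n : ℝ) ≠ 0 := hn0.ne'
  have hsum : ∑ j : Fin n, (∫ u : X × X, dist u.1 u.2 ∂(γ j)) ≤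
      ∑ j : Fin n, W1 (p j) (q j) + n * ε' := by
    calc ∑ j : Fin n, (∫ u : X × X, dist u.1 u.2 ∂(γ j))
        ≤ ∑ j : Fin n, (W1 (p j) (q j) + ε') := Finset.sum_le_sum fun j _ => hγint j
      _ = ∑ j : Fin n, W1 (p j) (q j) + n * ε' := by
          rw [Finset.sum_add_distrib]; simp [mul_comm]
  calc K * dist t t' + K * (∫ u : X × X, dist u.1 u.2 ∂γ₀) +
        K * ((n : ℝ)⁻¹ * ∑ j : Fin n, ∫ u : X × X, dist u.1 u.2 ∂(γ j))
      ≤ K * dist t t' + K * (W1 π η + ε') +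
        K * ((n : ℝ)⁻¹ * (∑ j : Fin n, W1 (p j) (q j) + n * ε')) := by gcongr
    _ = K * dist t t' + K * W1 π η + K * ((n : ℝ)⁻¹ * ∑ j : Fin n, W1 (p j) (q j)) + ε := by
        rw [hε'def]; field_simp; ring
end Key

/-- **Lipschitz estimate for the mixed extension.**
Here `N = n + 1 ≥ 2`, a player of type `t` playing `x` against the strategies
`z : Fin n → X` of the `n` other players pays `J t x z`, `J` being symmetric in the
others' strategies and satisfying
`|J t x z - J t' y w| ≤ K d_Θ(t,t') + K d_X(x,y) + K W₁(emp z, emp w)`.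
Then the mixed extension `J̄(t, π, p) = ∫ J t x z dπ(x) d(⊗ⱼ p j)(z)` satisfies
`|J̄(t,π,p) - J̄(t',η,q)| ≤ K d_Θ(t,t') + K W₁(π,η) + K min_σ (1/n) Σⱼ W₁(pⱼ, q_{σ(j)})`. -/
theorem mixedExtension_lipschitz_estimate
    {Θ X : Type*}
    [MetricSpace Θ] [CompactSpace Θ]
    [MetricSpace X] [CompactSpace X] [MeasurableSpace X] [BorelSpace X]
    (n : ℕ) (hn : 1 ≤ n) (K : ℝ) (hK : 0 < K)
    (J : Θ → X → (Fin n → X) → ℝ)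
    (hsym : ∀ (t : Θ) (x : X) (σ : Equiv.Perm (Fin n)) (z : Fin n → X),
      J t x (z ∘ σ) = J t x z)
    (hlip : ∀ (t t' : Θ) (x y : X) (z w : Fin n → X),
      |J t x z - J t' y w| ≤ K * dist t t' + K * dist x y +
        K * W1 ((n : ℝ≥0∞)⁻¹ • ∑ j : Fin n, Measure.dirac (z j))
               ((n : ℝ≥0∞)⁻¹ • ∑ j : Fin n, Measure.dirac (w j)))
    (t t' : Θ)
    (π η : Measure X) [IsProbabilityMeasure π] [IsProbabilityMeasure η]
    (p q : Fin n → Measure X)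
    (hp : ∀ j, IsProbabilityMeasure (p j)) (hq : ∀ j, IsProbabilityMeasure (q j)) :
    |(∫ u : X × (Fin n → X), J t u.1 u.2 ∂(π.prod (Measure.pi p))) -
        ∫ u : X × (Fin n → X), J t' u.1 u.2 ∂(η.prod (Measure.pi q))| ≤
      K * dist t t' + K * W1 π η +
        K * ⨅ σ : Equiv.Perm (Fin n), (n : ℝ)⁻¹ * ∑ j : Fin n, W1 (p j) (q (σ j)) := by
  haveI := hp; haveI := hq
  obtain ⟨σ₀, hσ₀⟩ := Finite.exists_min fun σ : Equiv.Perm (Fin n) =>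
    (n : ℝ)⁻¹ * ∑ j : Fin n, W1 (p j) (q (σ j))
  have hiInf : (⨅ σ : Equiv.Perm (Fin n), (n : ℝ)⁻¹ * ∑ j : Fin n, W1 (p j) (q (σ j)))
      = (n : ℝ)⁻¹ * ∑ j : Fin n, W1 (p j) (q (σ₀ j)) :=
    le_antisymm (ciInf_le (Finite.bddBelow_range _) σ₀) (le_ciInf hσ₀)
  rw [hiInf]
  haveI : ∀ j, IsProbabilityMeasure (q (σ₀ j)) := fun j => hq _
  have hswap : (∫ u : X × (Fin n → X), J t' u.1 u.2 ∂(η.prod (Measure.pi q)))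
      = ∫ u : X × (Fin n → X), J t' u.1 u.2 ∂(η.prod (Measure.pi fun j => q (σ₀ j))) := by
    have hg : Measurable fun (w : Fin n → X) => w ∘ σ₀.symm :=
      measurable_pi_lambda _ fun j => measurable_pi_apply _
    have h1 : η.prod (Measure.pi q)
        = (η.prod (Measure.pi fun j => q (σ₀ j))).map (Prod.map id fun w => w ∘ σ₀.symm) := by
      rw [← Measure.map_prod_map _ _ measurable_id hg, Measure.map_id, pi_map_perm q σ₀]
    rw [h1, integral_map (measurable_id.prodMap hg).aemeasurable
      (J_continuous hn hK hlip t').aestronglyMeasurable]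
    congr 1
    funext u
    exact hsym t' u.1 σ₀.symm u.2
  rw [hswap]
  exact key_estimate n hn K hK J hlip t t' π η p (fun j => q (σ₀ j)) hp fun j => hq _
end

section
/- Let Θ and X be compact metric spaces, c : Θ × X → ℝ continuous, and V : P(X) × X → ℝ such that V(ν,·) is bounded and Borel measurable for each ν. Set F(θ,x,ν) := c(θ,x) + V(ν,x). If γ is a Cournot-Nash equilibrium for F and μ, and ν denotes the second marginal of γ, then γ is an optimal transport plan between μ and ν for the cost c: γ ∈ Π(μ,ν) and ∫_{Θ×X} c dγ = W_c(μ,ν) = inf_{γ' ∈ Π(μ,ν)} ∫_{Θ×X} c dγ'. -/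
open MeasureTheory ProbabilityTheory

/-- Integral monotonicity when the pointwise inequality holds on a (possibly nonmeasurable)
set of measure one. -/
lemma integral_mono_of_measure_one {α : Type*} [MeasurableSpace α]
    (γ : Measure α) [IsProbabilityMeasure γ] {f h : α → ℝ}
    (hf : Integrable f γ) (hh : Integrable h γ)
    (hfm : Measurable f) (hhm : Measurable h) {s : Set α}
    (hs : γ s = 1) (hle : ∀ p ∈ s, f p ≤ h p) :
    ∫ p, f p ∂γ ≤ ∫ p, h p ∂γ := by
  refine integral_mono_ae hf hh ?_
  have hm : MeasurableSet {p | f p ≤ h p} := measurableSet_le hfm hhm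
  have h1 : γ {p | f p ≤ h p} = 1 :=
    le_antisymm prob_le_one (hs ▸ measure_mono hle)
  have h0 : γ {p | f p ≤ h p}ᶜ = 0 := (prob_compl_eq_zero_iff hm).2 h1
  rw [Filter.EventuallyLE, ae_iff]
  rw [show {a | ¬f a ≤ h a} = {p | f p ≤ h p}ᶜ from by ext p; simp]
  exact h0

/-- **A Cournot-Nash equilibrium is an optimal transport plan.**
In the separable case `F(θ,x,ν) = c(θ,x) + V(ν,x)` with `c` continuous and `V(ν,·)`
bounded and Borel measurable, if `γ` is a Cournot-Nash equilibrium for `F` and `μ`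
and `ν` denotes its second marginal, then `γ ∈ Π(μ,ν)` and
`∫ c dγ = W_c(μ,ν) = inf_{γ' ∈ Π(μ,ν)} ∫ c dγ'`. -/
theorem cournotNash_is_optimal_plan
    {Θ X : Type*}
    [MetricSpace Θ] [CompactSpace Θ] [MeasurableSpace Θ] [BorelSpace Θ]
    [MetricSpace X] [CompactSpace X] [MeasurableSpace X] [BorelSpace X]
    (c : Θ → X → ℝ) (hc : Continuous fun p : Θ × X => c p.1 p.2)
    (V : Measure X → X → ℝ)
    (hVmeas : ∀ ν : Measure X, Measurable (V ν))
    (hVbdd : ∀ ν : Measure X, ∃ M : ℝ, ∀ x : X, |V ν x| ≤ M)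
    (μ : Measure Θ) (γ : Measure (Θ × X)) [IsProbabilityMeasure γ]
    (hμ : γ.map Prod.fst = μ)
    (hCN : γ {p : Θ × X | ∀ y : X,
      c p.1 p.2 + V (γ.map Prod.snd) p.2 ≤ c p.1 y + V (γ.map Prod.snd) y} = 1) :
    γ ∈ Couplings μ (γ.map Prod.snd) ∧
      ∫ p, c p.1 p.2 ∂γ = transportCost c μ (γ.map Prod.snd) := by
  -- nonemptiness
  have hne : Nonempty (Θ × X) := by
    by_contra h
    rw [not_nonempty_iff] at h
    have := measure_univ (μ := γ)
    simp [Set.univ_eq_empty_iff.2 h] at this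
  have hXne : Nonempty X := ⟨hne.some.2⟩
  set ν : Measure X := γ.map Prod.snd with hν
  have hcoup : γ ∈ Couplings μ ν := ⟨inferInstance, hμ, rfl⟩
  refine ⟨hcoup, ?_⟩
  -- bounds and measurability
  obtain ⟨C, hC⟩ := isCompact_univ.exists_bound_of_continuousOn
    (hc.continuousOn (s := Set.univ))
  obtain ⟨M, hM⟩ := hVbdd ν
  have hcm : Measurable fun p : Θ × X => c p.1 p.2 := hc.measurable
  have hVm : Measurable fun p : Θ × X => V ν p.2 := (hVmeas ν).comp measurable_snd
  set g : Θ × X → ℝ := fun p => c p.1 p.2 + V ν p.2 with hg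
  have hgm : Measurable g := hcm.add hVm
  have hgb : ∀ p, ‖g p‖ ≤ C + M := by
    intro p
    calc ‖g p‖ ≤ ‖c p.1 p.2‖ + ‖V ν p.2‖ := norm_add_le _ _
    _ ≤ C + M := add_le_add (hC p trivial) (hM p.2)
  have hgint : ∀ (ρ : Measure (Θ × X)) [IsFiniteMeasure ρ], Integrable g ρ :=
    fun ρ _ => ⟨hgm.aestronglyMeasurable,
      HasFiniteIntegral.of_bounded (C := C + M) (Filter.Eventually.of_forall hgb)⟩
  have hcint : ∀ (ρ : Measure (Θ × X)) [IsFiniteMeasure ρ],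
      Integrable (fun p : Θ × X => c p.1 p.2) ρ :=
    fun ρ _ => ⟨hcm.aestronglyMeasurable,
      HasFiniteIntegral.of_bounded (C := C) (Filter.Eventually.of_forall fun p => hC p trivial)⟩
  have hVint : ∀ (ρ : Measure (Θ × X)) [IsFiniteMeasure ρ],
      Integrable (fun p : Θ × X => V ν p.2) ρ :=
    fun ρ _ => ⟨hVm.aestronglyMeasurable,
      HasFiniteIntegral.of_bounded (C := M) (Filter.Eventually.of_forall fun p => hM p.2)⟩
  -- the key comparison with any other coupling
  have key : ∀ γ' ∈ Couplings μ ν, ∫ p, c p.1 p.2 ∂γ ≤ ∫ p, c p.1 p.2 ∂γ' := by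
    rintro γ' ⟨hP', hfst', hsnd'⟩
    haveI := hP'
    set κ := γ'.condKernel with hκ
    have hdis : γ'.fst ⊗ₘ κ = γ' := γ'.disintegrate κ
    set G : Θ → ℝ := fun θ => ∫ y, g (θ, y) ∂κ θ with hG
    have hGm : StronglyMeasurable G := hgm.stronglyMeasurable.integral_kernel_prod_right'
    have hGb : ∀ θ, ‖G θ‖ ≤ C + M := by
      intro θ
      have := norm_integral_le_of_norm_le_const (μ := κ θ)
        (f := fun y => g (θ, y)) (C := C + M)
        (Filter.Eventually.of_forall fun y => hgb _)
      simpa using this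
    have hGint : Integrable (fun p : Θ × X => G p.1) γ :=
      ⟨(hGm.measurable.comp measurable_fst).aestronglyMeasurable,
        HasFiniteIntegral.of_bounded (C := C + M)
          (Filter.Eventually.of_forall fun p => hGb p.1)⟩
    -- on the equilibrium set, g p ≤ G p.1
    have hle : ∀ p ∈ {p : Θ × X | ∀ y : X,
        c p.1 p.2 + V ν p.2 ≤ c p.1 y + V ν y}, g p ≤ G p.1 := by
      intro p hp
      have h1 : g p = ∫ _y, g p ∂κ p.1 := by
        simp [integral_const, measure_univ]
      rw [h1]
      refine integral_mono (integrable_const _) ?_ fun y => hp y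
      exact ⟨(hgm.comp (measurable_const.prodMk measurable_id)).aestronglyMeasurable,
        HasFiniteIntegral.of_bounded (C := C + M)
          (Filter.Eventually.of_forall fun y => hgb _)⟩
    have h1 : ∫ p, g p ∂γ ≤ ∫ p, G p.1 ∂γ :=
      integral_mono_of_measure_one γ (hgint γ) hGint hgm
        (hGm.measurable.comp measurable_fst) hCN hle
    have h2 : ∫ p, G p.1 ∂γ = ∫ θ, G θ ∂μ := by
      rw [← hμ]
      exact (integral_map measurable_fst.aemeasurable
        hGm.measurable.aestronglyMeasurable).symm
    have h3 : ∫ θ, G θ ∂μ = ∫ p, g p ∂γ' := by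
      have hfst : γ'.fst = μ := hfst'
      have hint' : Integrable g (γ'.fst ⊗ₘ κ) := by rw [hdis]; exact hgint γ'
      have h := Measure.integral_compProd hint'
      rw [hdis, hfst] at h
      exact h.symm
    have hgle : ∫ p, g p ∂γ ≤ ∫ p, g p ∂γ' := by
      calc ∫ p, g p ∂γ ≤ ∫ p, G p.1 ∂γ := h1
      _ = ∫ θ, G θ ∂μ := h2
      _ = ∫ p, g p ∂γ' := h3
    -- V-integrals agree since the second marginals agree
    have hVeq : ∫ p, V ν p.2 ∂γ = ∫ p, V ν p.2 ∂γ' := by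
      have hVγ : ∫ x, V ν x ∂(Measure.map Prod.snd γ) = ∫ p, V ν p.2 ∂γ :=
        integral_map measurable_snd.aemeasurable (hVmeas ν).aestronglyMeasurable
      have hVγ' : ∫ x, V ν x ∂(Measure.map Prod.snd γ') = ∫ p, V ν p.2 ∂γ' :=
        integral_map measurable_snd.aemeasurable (hVmeas ν).aestronglyMeasurable
      rw [← hν] at hVγ
      rw [hsnd'] at hVγ'
      rw [← hVγ, ← hVγ']
    have hsplit : ∀ (ρ : Measure (Θ × X)) [IsFiniteMeasure ρ],
        ∫ p, g p ∂ρ = (∫ p, c p.1 p.2 ∂ρ) + ∫ p, V ν p.2 ∂ρ :=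
      fun ρ _ => integral_add (hcint ρ) (hVint ρ)
    have := hgle
    rw [hsplit γ, hsplit γ', hVeq] at this
    linarith
  -- conclude: the integral attains the infimum
  have hmem : (∫ p, c p.1 p.2 ∂γ) ∈ (fun ρ => ∫ p, c p.1 p.2 ∂ρ) '' Couplings μ ν :=
    ⟨γ, hcoup, rfl⟩
  have hlb : (∫ p, c p.1 p.2 ∂γ) ∈ lowerBounds
      ((fun ρ => ∫ p, c p.1 p.2 ∂ρ) '' Couplings μ ν) := by
    rintro v ⟨γ', hγ', rfl⟩
    exact key γ' hγ'
  exact le_antisymm (le_csInf ⟨_, hmem⟩ fun v hv => hlb hv) (csInf_le ⟨_, hlb⟩ hmem)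
end

section
/- Let X be a compact metric space equipped with a reference Borel probability measure m_0, let f : X × [0,∞) → ℝ be continuous with f(x,·) nondecreasing, and let φ : X × X → ℝ be continuous and symmetric (φ(x,y) = φ(y,x)). For ν ∈ P(X) absolutely continuous with respect to m_0 with density also denoted ν, define V(ν,x) := f(x, ν(x)) + ∫_X φ(x,y) ν(dy), and define the energy J(ν) := ∫_X F(x, ν(x)) m_0(dx) + (1/2) ∫_{X×X} φ(x,y) ν(dx) ν(dy), where F(x,t) := ∫_0^t f(x,s) ds. Let ν, ν' ∈ P(X) be absolutely continuous with respect to m_0 with bounded densities. Then the function t ↦ J(ν + t(ν'−ν)) is right-differentiable at t = 0 with derivative ∫_X V(ν,x) (ν'−ν)(dx); i.e. V(ν,·) is the first variation of J at ν. -/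
open MeasureTheory

/-- **`V(ν,·)` is the first variation of the energy `J` at `ν`.**
Densities w.r.t. the reference measure `m₀` are denoted `ρ, ρ'` (bounded, nonnegative,
integrating to `1`).  With `F(x,t) = ∫₀ᵗ f(x,s) ds`,
`J(ν) = ∫ F(x, ν(x)) dm₀ + (1/2) ∫∫ φ(x,y) ν(dx) ν(dy)` and
`V(ν,x) = f(x, ν(x)) + ∫ φ(x,y) ν(dy)`, the map `t ↦ J(ν + t(ν'-ν))` is
right-differentiable at `t = 0` with derivative `∫ V(ν,x) (ν'-ν)(dx)`. -/
theorem firstVariation_of_energy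
    {X : Type*} [MetricSpace X] [CompactSpace X] [MeasurableSpace X] [BorelSpace X]
    (m0 : Measure X) [IsProbabilityMeasure m0]
    (f : X → ℝ → ℝ)
    (hf : ContinuousOn (fun p : X × ℝ => f p.1 p.2) (Set.univ ×ˢ Set.Ici 0))
    (hf_mono : ∀ x : X, MonotoneOn (f x) (Set.Ici 0))
    (φ : X → X → ℝ) (hφ : Continuous fun p : X × X => φ p.1 p.2)
    (hφ_symm : ∀ x y : X, φ x y = φ y x)
    (ρ ρ' : X → ℝ) (hρ_meas : Measurable ρ) (hρ'_meas : Measurable ρ')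
    (hρ_nonneg : ∀ x, 0 ≤ ρ x) (hρ'_nonneg : ∀ x, 0 ≤ ρ' x)
    (hρ_bdd : ∃ M : ℝ, ∀ x, ρ x ≤ M) (hρ'_bdd : ∃ M : ℝ, ∀ x, ρ' x ≤ M)
    (hρ_one : ∫ x, ρ x ∂m0 = 1) (hρ'_one : ∫ x, ρ' x ∂m0 = 1) :
    HasDerivWithinAt
      (fun t : ℝ =>
        (∫ x, (∫ s in (0:ℝ)..(ρ x + t * (ρ' x - ρ x)), f x s) ∂m0) +
          (1 / 2) * ∫ x, (∫ y, φ x y * (ρ y + t * (ρ' y - ρ y)) ∂m0) *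
            (ρ x + t * (ρ' x - ρ x)) ∂m0)
      (∫ x, (f x (ρ x) + ∫ y, φ x y * ρ y ∂m0) * (ρ' x - ρ x) ∂m0)
      (Set.Ici 0) 0 := by
  classical
  -- bound on densities
  obtain ⟨M0, hM0⟩ := hρ_bdd
  obtain ⟨M1, hM1⟩ := hρ'_bdd
  set M : ℝ := max (max M0 M1) 0 with hMdef
  have hM_nonneg : 0 ≤ M := le_max_right _ _
  have hρM : ∀ x, ρ x ≤ M := fun x => (hM0 x).trans ((le_max_left _ _).trans (le_max_left _ _))
  have hρ'M : ∀ x, ρ' x ≤ M := fun x => (hM1 x).trans ((le_max_right _ _).trans (le_max_left _ _))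
  have hσ_bdd : ∀ x, |ρ' x - ρ x| ≤ M := by
    intro x
    rw [abs_le]
    constructor
    · linarith [hρ'_nonneg x, hρM x]
    · linarith [hρ_nonneg x, hρ'M x]
  have hσ_meas : Measurable fun x => ρ' x - ρ x := hρ'_meas.sub hρ_meas
  -- the extended integrand
  set ft : X → ℝ → ℝ := fun x s => f x (max s 0) with hftdef
  have hft_cont : Continuous fun p : X × ℝ => ft p.1 p.2 := by
    have : Continuous fun p : X × ℝ => (p.1, max p.2 0) :=
      continuous_fst.prodMk (continuous_snd.max continuous_const)
    exact hf.comp_continuous this (fun p => ⟨Set.mem_univ _, Set.mem_Ici.2 (le_max_right _ _)⟩)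
  have hft_cont1 : ∀ x, Continuous (ft x) :=
    fun x => hft_cont.comp (continuous_const.prodMk continuous_id)
  -- a bound for ft on the relevant range
  obtain ⟨C0, hC0⟩ :=
    ((isCompact_univ (X := X)).prod (isCompact_Icc (a := -(2*M)) (b := 2*M))).exists_bound_of_continuousOn
      hft_cont.continuousOn
  set C : ℝ := max C0 0 with hCdef
  have hC_nonneg : 0 ≤ C := le_max_right _ _
  have hC : ∀ x s, |s| ≤ 2*M → ‖ft x s‖ ≤ C := by
    intro x s hs
    rw [abs_le] at hs
    exact (hC0 (x, s) ⟨Set.mem_univ _, hs.1, hs.2⟩).trans (le_max_left _ _)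
  -- the primitive
  set G : X → ℝ → ℝ := fun x u => ∫ s in (0:ℝ)..u, ft x s with hGdef
  have hG_cont : Continuous fun p : X × ℝ => G p.1 p.2 :=
    intervalIntegral.continuous_parametric_primitive_of_continuous hft_cont
  have hG_sub : ∀ x (a b : ℝ), G x b - G x a = ∫ s in a..b, ft x s := by
    intro x a b
    exact intervalIntegral.integral_interval_sub_left
      ((hft_cont1 x).intervalIntegrable _ _) ((hft_cont1 x).intervalIntegrable _ _)
  have hG_lip : ∀ x (a b : ℝ), |a| ≤ 2*M → |b| ≤ 2*M → ‖G x b - G x a‖ ≤ C * |b - a| := by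
    intro x a b ha hb
    rw [hG_sub]
    apply intervalIntegral.norm_integral_le_of_norm_le_const
    intro s hs
    apply hC
    rw [Set.mem_uIoc] at hs
    rw [abs_le] at ha hb ⊢
    rcases hs with hs | hs
    · exact ⟨le_of_lt (lt_of_le_of_lt ha.1 hs.1), hs.2.trans hb.2⟩
    · exact ⟨le_of_lt (lt_of_le_of_lt hb.1 hs.1), hs.2.trans ha.2⟩
  have hG_bd : ∀ x (u : ℝ), |u| ≤ 2*M → ‖G x u‖ ≤ C * (2*M) := by
    intro x u hu
    have := hG_lip x 0 u (by simpa using by positivity) hu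
    simp only [hGdef] at this ⊢
    simp only [intervalIntegral.integral_same, sub_zero] at this
    calc ‖∫ s in (0:ℝ)..u, ft x s‖ ≤ C * |u - 0| := by simpa using this
    _ ≤ C * (2*M) := by
        apply mul_le_mul_of_nonneg_left _ hC_nonneg
        simpa using hu
  -- integrability helper
  have intbdd : ∀ (g : X → ℝ) (c : ℝ), AEStronglyMeasurable g m0 → (∀ x, ‖g x‖ ≤ c) →
      Integrable g m0 := by
    intro g c hm hb
    exact (integrable_const c).mono' hm (Filter.Eventually.of_forall hb)
  -- range of the densities for |t| < 1
  have hrange : ∀ (t : ℝ) (x : X), |t| ≤ 1 → |ρ x + t * (ρ' x - ρ x)| ≤ 2*M := by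
    intro t x ht
    calc |ρ x + t * (ρ' x - ρ x)| ≤ |ρ x| + |t * (ρ' x - ρ x)| := abs_add_le _ _
    _ ≤ M + 1 * M := by
        rw [abs_mul]
        gcongr
        · rw [abs_of_nonneg (hρ_nonneg x)]; exact hρM x
        · exact hσ_bdd x
    _ = 2*M := by ring
  -- measurability of x ↦ G x (ρ x + t (ρ' x - ρ x))
  have hmeasG : ∀ t : ℝ, AEStronglyMeasurable (fun x => G x (ρ x + t * (ρ' x - ρ x))) m0 := by
    intro t
    exact (hG_cont.measurable.comp
      (measurable_id.prodMk (hρ_meas.add (hσ_meas.const_mul t)))).aestronglyMeasurable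
  ------------------------------------------------------------------
  -- Part 1: the entropy-like term, via dominated differentiation
  ------------------------------------------------------------------
  have hA : HasDerivAt (fun t : ℝ => ∫ x, G x (ρ x + t * (ρ' x - ρ x)) ∂m0)
      (∫ x, ft x (ρ x) * (ρ' x - ρ x) ∂m0) 0 := by
    have key := hasDerivAt_integral_of_dominated_loc_of_lip
      (F := fun t x => G x (ρ x + t * (ρ' x - ρ x)))
      (F' := fun x => ft x (ρ x) * (ρ' x - ρ x))
      (x₀ := (0:ℝ)) (bound := fun x => C * M)
      (μ := m0) (s := Metric.ball (0:ℝ) 1) (Metric.ball_mem_nhds _ one_pos)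
      (Filter.Eventually.of_forall hmeasG)
      ?hint ?hF'meas ?hlip ?hbnd ?hdiff
    · exact key.2
    case hint =>
      apply intbdd _ (C * (2*M)) (hmeasG 0)
      intro x
      simp only [zero_mul, add_zero]
      have : |ρ x| ≤ 2*M := by
        rw [abs_of_nonneg (hρ_nonneg x)]
        linarith [hρM x]
      exact hG_bd x (ρ x) this
    case hF'meas =>
      apply AEStronglyMeasurable.mul _ hσ_meas.aestronglyMeasurable
      exact (hft_cont.measurable.comp
        (measurable_id.prodMk hρ_meas)).aestronglyMeasurable
    case hlip =>
      apply Filter.Eventually.of_forall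
      intro x
      apply LipschitzOnWith.of_dist_le_mul
      intro t ht t' ht'
      simp only [Metric.mem_ball, Real.dist_eq, sub_zero] at ht ht'
      rw [Real.dist_eq, Real.dist_eq]
      have h1 : |ρ x + t * (ρ' x - ρ x)| ≤ 2*M := hrange t x ht.le
      have h2 : |ρ x + t' * (ρ' x - ρ x)| ≤ 2*M := hrange t' x ht'.le
      have hkey := hG_lip x (ρ x + t' * (ρ' x - ρ x)) (ρ x + t * (ρ' x - ρ x)) h2 h1
      have heq : (ρ x + t * (ρ' x - ρ x)) - (ρ x + t' * (ρ' x - ρ x))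
          = (t - t') * (ρ' x - ρ x) := by ring
      rw [heq, abs_mul] at hkey
      calc |G x (ρ x + t * (ρ' x - ρ x)) - G x (ρ x + t' * (ρ' x - ρ x))|
          ≤ C * (|t - t'| * |ρ' x - ρ x|) := hkey
        _ ≤ (Real.nnabs (C * M) : ℝ) * |t - t'| := by
            rw [Real.coe_nnabs, abs_of_nonneg (mul_nonneg hC_nonneg hM_nonneg)]
            nlinarith [mul_nonneg (mul_nonneg hC_nonneg (abs_nonneg (t - t')))
              (sub_nonneg.2 (hσ_bdd x)), abs_nonneg (t - t'), abs_nonneg (ρ' x - ρ x)]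
    case hbnd => exact integrable_const _
    case hdiff =>
      apply Filter.Eventually.of_forall
      intro x
      have hu : HasDerivAt (fun t : ℝ => ρ x + t * (ρ' x - ρ x)) (ρ' x - ρ x) 0 := by
        simpa using ((hasDerivAt_id (0:ℝ)).mul_const (ρ' x - ρ x)).const_add (ρ x)
      have hGd : HasDerivAt (fun u => G x u) (ft x (ρ x)) (ρ x) :=
        intervalIntegral.integral_hasDerivAt_right
          ((hft_cont1 x).intervalIntegrable _ _)
          ((hft_cont1 x).stronglyMeasurable.stronglyMeasurableAtFilter)
          (hft_cont1 x).continuousAt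
      have e : ρ x = ρ x + 0 * (ρ' x - ρ x) := by ring
      rw [e] at hGd
      have := hGd.comp (0:ℝ) hu
      simpa [Function.comp_def] using this
  ------------------------------------------------------------------
  -- Part 2: the interaction term is a quadratic polynomial in t
  ------------------------------------------------------------------
  -- bound for φ
  obtain ⟨Cφ0, hCφ0⟩ := (isCompact_univ (X := X × X)).exists_bound_of_continuousOn hφ.continuousOn
  set Cφ : ℝ := max Cφ0 0 with hCφdef
  have hCφ_nonneg : 0 ≤ Cφ := le_max_right _ _
  have hCφ : ∀ x y, ‖φ x y‖ ≤ Cφ := fun x y =>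
    (hCφ0 (x, y) (Set.mem_univ _)).trans (le_max_left _ _)
  set a : X → ℝ := fun x => ∫ y, φ x y * ρ y ∂m0 with hadef
  set b : X → ℝ := fun x => ∫ y, φ x y * (ρ' y - ρ y) ∂m0 with hbdef
  have hφ_sm : StronglyMeasurable fun p : X × X => φ p.1 p.2 := hφ.stronglyMeasurable
  have ha_meas : StronglyMeasurable a :=
    (hφ_sm.mul (hρ_meas.comp measurable_snd).stronglyMeasurable).integral_prod_right'
  have hb_meas : StronglyMeasurable b :=
    (hφ_sm.mul (hσ_meas.comp measurable_snd).stronglyMeasurable).integral_prod_right'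
  have habd : ∀ x, ‖a x‖ ≤ Cφ * M := by
    intro x
    show ‖∫ y, φ x y * ρ y ∂m0‖ ≤ Cφ * M
    rw [show Cφ * M = ∫ _, Cφ * M ∂m0 by simp]
    apply norm_integral_le_of_norm_le (integrable_const _)
    apply Filter.Eventually.of_forall
    intro y
    rw [norm_mul]
    apply mul_le_mul (hCφ x y) _ (norm_nonneg _) hCφ_nonneg
    rw [Real.norm_eq_abs, abs_of_nonneg (hρ_nonneg y)]
    exact hρM y
  have hbbd : ∀ x, ‖b x‖ ≤ Cφ * M := by
    intro x
    show ‖∫ y, φ x y * (ρ' y - ρ y) ∂m0‖ ≤ Cφ * M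
    rw [show Cφ * M = ∫ _, Cφ * M ∂m0 by simp]
    apply norm_integral_le_of_norm_le (integrable_const _)
    apply Filter.Eventually.of_forall
    intro y
    rw [norm_mul]
    exact mul_le_mul (hCφ x y) (hσ_bdd y) (norm_nonneg _) hCφ_nonneg
  -- integrability of pointwise products
  have hφρ_int : ∀ x, Integrable (fun y => φ x y * ρ y) m0 := by
    intro x
    apply intbdd (fun y => φ x y * ρ y) (Cφ * M)
      (((hφ.comp (continuous_const.prodMk continuous_id)).measurable.mul hρ_meas).aestronglyMeasurable)
    intro y
    rw [norm_mul]
    apply mul_le_mul (hCφ x y) _ (norm_nonneg _) hCφ_nonneg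
    rw [Real.norm_eq_abs, abs_of_nonneg (hρ_nonneg y)]
    exact hρM y
  have hφσ_int : ∀ x, Integrable (fun y => φ x y * (ρ' y - ρ y)) m0 := by
    intro x
    apply intbdd (fun y => φ x y * (ρ' y - ρ y)) (Cφ * M)
      (((hφ.comp (continuous_const.prodMk continuous_id)).measurable.mul hσ_meas).aestronglyMeasurable)
    intro y
    rw [norm_mul]
    exact mul_le_mul (hCφ x y) (hσ_bdd y) (norm_nonneg _) hCφ_nonneg
  -- inner integral expansion
  have hinner : ∀ (t : ℝ) (x : X),
      (∫ y, φ x y * (ρ y + t * (ρ' y - ρ y)) ∂m0) = a x + t * b x := by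
    intro t x
    have : (fun y => φ x y * (ρ y + t * (ρ' y - ρ y)))
        = fun y => φ x y * ρ y + t * (φ x y * (ρ' y - ρ y)) := by
      funext y; ring
    rw [this, integral_add (hφρ_int x) ((hφσ_int x).const_mul t), integral_const_mul]
  -- the three coefficients
  set q0 : ℝ := ∫ x, a x * ρ x ∂m0 with hq0def
  set q1 : ℝ := ∫ x, (a x * (ρ' x - ρ x) + b x * ρ x) ∂m0 with hq1def
  set q2 : ℝ := ∫ x, b x * (ρ' x - ρ x) ∂m0 with hq2def
  have haρ_int : Integrable (fun x => a x * ρ x) m0 := by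
    apply intbdd (fun x => a x * ρ x) ((Cφ * M) * M)
      ((ha_meas.measurable.mul hρ_meas).aestronglyMeasurable)
    intro x
    rw [norm_mul]
    apply mul_le_mul (habd x) _ (norm_nonneg _) (by positivity)
    rw [Real.norm_eq_abs, abs_of_nonneg (hρ_nonneg x)]; exact hρM x
  have haσ_int : Integrable (fun x => a x * (ρ' x - ρ x)) m0 := by
    apply intbdd (fun x => a x * (ρ' x - ρ x)) ((Cφ * M) * M)
      ((ha_meas.measurable.mul hσ_meas).aestronglyMeasurable)
    intro x
    rw [norm_mul]
    exact mul_le_mul (habd x) (hσ_bdd x) (norm_nonneg _) (by positivity)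
  have hbρ_int : Integrable (fun x => b x * ρ x) m0 := by
    apply intbdd (fun x => b x * ρ x) ((Cφ * M) * M)
      ((hb_meas.measurable.mul hρ_meas).aestronglyMeasurable)
    intro x
    rw [norm_mul]
    apply mul_le_mul (hbbd x) _ (norm_nonneg _) (by positivity)
    rw [Real.norm_eq_abs, abs_of_nonneg (hρ_nonneg x)]; exact hρM x
  have hbσ_int : Integrable (fun x => b x * (ρ' x - ρ x)) m0 := by
    apply intbdd (fun x => b x * (ρ' x - ρ x)) ((Cφ * M) * M)
      ((hb_meas.measurable.mul hσ_meas).aestronglyMeasurable)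
    intro x
    rw [norm_mul]
    exact mul_le_mul (hbbd x) (hσ_bdd x) (norm_nonneg _) (by positivity)
  have hquad : ∀ t : ℝ,
      (∫ x, (∫ y, φ x y * (ρ y + t * (ρ' y - ρ y)) ∂m0) * (ρ x + t * (ρ' x - ρ x)) ∂m0)
        = q0 + t * q1 + t^2 * q2 := by
    intro t
    have : (fun x => (∫ y, φ x y * (ρ y + t * (ρ' y - ρ y)) ∂m0) * (ρ x + t * (ρ' x - ρ x)))
        = fun x => a x * ρ x + t * (a x * (ρ' x - ρ x) + b x * ρ x)
            + t^2 * (b x * (ρ' x - ρ x)) := by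
      funext x
      rw [hinner t x]
      ring
    have i3 : Integrable (fun x => t * (a x * (ρ' x - ρ x) + b x * ρ x)) m0 :=
      (haσ_int.add hbρ_int).const_mul t
    have i1 : Integrable (fun x => a x * ρ x + t * (a x * (ρ' x - ρ x) + b x * ρ x)) m0 :=
      haρ_int.add i3
    have i2 : Integrable (fun x => t ^ 2 * (b x * (ρ' x - ρ x))) m0 :=
      hbσ_int.const_mul _
    rw [this, integral_add i1 i2, integral_add haρ_int i3,
      integral_const_mul, integral_const_mul, hq0def, hq1def, hq2def]
  -- Fubini symmetry:  ∫ b ρ = ∫ a σ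
  have hfub : (∫ x, b x * ρ x ∂m0) = ∫ x, a x * (ρ' x - ρ x) ∂m0 := by
    have hint : Integrable (fun p : X × X => φ p.1 p.2 * (ρ' p.2 - ρ p.2) * ρ p.1)
        (m0.prod m0) := by
      apply (integrable_const ((Cφ * M) * M)).mono'
      · exact ((hφ_sm.measurable.mul (hσ_meas.comp measurable_snd)).mul
          (hρ_meas.comp measurable_fst)).aestronglyMeasurable
      · apply Filter.Eventually.of_forall
        rintro ⟨x, y⟩
        rw [norm_mul, norm_mul]
        apply mul_le_mul _ _ (norm_nonneg _) (by positivity)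
        · exact mul_le_mul (hCφ x y) (hσ_bdd y) (norm_nonneg _) hCφ_nonneg
        · rw [Real.norm_eq_abs, abs_of_nonneg (hρ_nonneg x)]; exact hρM x
    calc (∫ x, b x * ρ x ∂m0)
        = ∫ x, ∫ y, φ x y * (ρ' y - ρ y) * ρ x ∂m0 ∂m0 := by
          congr 1; funext x
          rw [← integral_mul_const]
      _ = ∫ y, ∫ x, φ x y * (ρ' y - ρ y) * ρ x ∂m0 ∂m0 := integral_integral_swap hint
      _ = ∫ y, a y * (ρ' y - ρ y) ∂m0 := by
          congr 1; funext y
          have : (fun x => φ x y * (ρ' y - ρ y) * ρ x)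
              = fun x => (φ y x * ρ x) * (ρ' y - ρ y) := by
            funext x; rw [hφ_symm x y]; ring
          rw [this, integral_mul_const]
  ------------------------------------------------------------------
  -- Assemble
  ------------------------------------------------------------------
  have hP : HasDerivAt (fun t : ℝ => q0 + t * q1 + t^2 * q2) q1 0 := by
    have h1 : HasDerivAt (fun t : ℝ => q0 + t * q1) q1 0 := by
      simpa using ((hasDerivAt_id (0:ℝ)).mul_const q1).const_add q0
    have h2 : HasDerivAt (fun t : ℝ => t^2 * q2) 0 0 := by
      simpa using (hasDerivAt_pow 2 (0:ℝ)).mul_const q2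
    simpa [Pi.add_def] using h1.add h2
  have hsum : HasDerivAt
      (fun t : ℝ => (∫ x, G x (ρ x + t * (ρ' x - ρ x)) ∂m0)
        + (1/2) * (q0 + t * q1 + t^2 * q2))
      ((∫ x, ft x (ρ x) * (ρ' x - ρ x) ∂m0) + (1/2) * q1) 0 :=
    hA.add (hP.const_mul (1/2))
  have hres := hsum.hasDerivWithinAt (s := Set.Ici (0:ℝ))
  -- identify the derivative value
  have hderiv_eq : (∫ x, (f x (ρ x) + ∫ y, φ x y * ρ y ∂m0) * (ρ' x - ρ x) ∂m0)
      = (∫ x, ft x (ρ x) * (ρ' x - ρ x) ∂m0) + (1/2) * q1 := by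
    have hfρσ_eq : (fun x => ft x (ρ x) * (ρ' x - ρ x))
        = fun x => f x (ρ x) * (ρ' x - ρ x) := by
      funext x
      simp only [hftdef, max_eq_left (hρ_nonneg x)]
    have hq1' : q1 = (∫ x, a x * (ρ' x - ρ x) ∂m0) + ∫ x, b x * ρ x ∂m0 := by
      rw [hq1def, integral_add haσ_int hbρ_int]
    have hsplit : (fun x => (f x (ρ x) + a x) * (ρ' x - ρ x))
        = fun x => f x (ρ x) * (ρ' x - ρ x) + a x * (ρ' x - ρ x) := by
      funext x; ring
    have hfρ_int : Integrable (fun x => f x (ρ x) * (ρ' x - ρ x)) m0 := by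
      rw [← hfρσ_eq]
      apply intbdd _ (C * M)
      · exact ((hft_cont.measurable.comp
          (measurable_id.prodMk hρ_meas)).mul hσ_meas).aestronglyMeasurable
      · intro x
        rw [norm_mul]
        apply mul_le_mul _ (hσ_bdd x) (abs_nonneg _) hC_nonneg
        apply hC
        rw [abs_of_nonneg (hρ_nonneg x)]
        calc ρ x ≤ M := hρM x
          _ ≤ 2*M := by linarith
    rw [hsplit, integral_add hfρ_int haσ_int, hfρσ_eq, hq1', hfub]
    ring
  rw [hderiv_eq]
  -- identify the function on a right-neighbourhood of 0
  apply hres.congr_of_eventuallyEq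
  · filter_upwards [nhdsWithin_le_nhds (Metric.ball_mem_nhds (0:ℝ) one_pos),
      self_mem_nhdsWithin] with t ht ht0
    simp only [Metric.mem_ball, Real.dist_eq, sub_zero] at ht
    have ht1 : t < 1 := (le_abs_self t).trans_lt ht
    have ht0' : (0:ℝ) ≤ t := ht0
    congr 1
    · -- the f-part agrees since the density stays nonnegative
      apply integral_congr_ae
      apply Filter.Eventually.of_forall
      intro x
      have hnn : 0 ≤ ρ x + t * (ρ' x - ρ x) := by
        have : ρ x + t * (ρ' x - ρ x) = (1 - t) * ρ x + t * ρ' x := by ring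
        rw [this]
        have := hρ_nonneg x
        have := hρ'_nonneg x
        nlinarith
      apply intervalIntegral.integral_congr
      intro s hs
      rw [Set.uIcc_of_le hnn] at hs
      simp only [hftdef]
      rw [max_eq_left hs.1]
    · rw [hquad t]
  · -- value at 0
    simp only [zero_mul, add_zero, mul_zero]
    congr 1
    · apply integral_congr_ae
      apply Filter.Eventually.of_forall
      intro x
      apply intervalIntegral.integral_congr
      intro s hs
      rw [Set.uIcc_of_le (hρ_nonneg x)] at hs
      simp only [hftdef]
      rw [max_eq_left hs.1]
    · have := hquad 0
      simp only [zero_mul, add_zero, mul_zero] at this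
      rw [this]
end
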